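/- arXiv:1907.10196 — 6 statements merged into one kernel-verified Lean document; each statement's English description precedes it below -/
import Mathlib

section
/- For a path γ of length n from x to y in a finite connected graph, the set of first-entrance edges forms a spanning tree of the set of vertices visited by γ; equivalently, the graph on V(γ) whose edges are the first-entrance edges (one for each vertex of γ other than x) is connected and acyclic. -/
open scoped Classical

/-- The first-entrance tree of a path of length `n`: for each vertex other than the start
that is visited, the (unoriented) edge by which it was first entered. -/
def feTree {V : Type*} (γ : ℕ → V) (n : ℕ) : Set (Sym2 V) :=
  {e | ∃ i, 0 < i ∧ i ≤ n ∧ (∀ j < i, γ j ≠ γ i) ∧ e = s(γ (i - 1), γ i)}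

/-- The simple graph on `V` whose edges are a given set of unordered pairs. -/
def edgeGraph {V : Type*} (E : Set (Sym2 V)) : SimpleGraph V where
  Adj a b := a ≠ b ∧ s(a, b) ∈ E
  symm := ⟨fun a b h => ⟨h.1.symm, by rw [Sym2.eq_swap]; exact h.2⟩⟩
  loopless := ⟨fun a h => h.1 rfl⟩

/-- The first-entrance rank of a vertex: the first time it is visited. -/
private noncomputable def feRk {V : Type*} (γ : ℕ → V) (v : V) : ℕ := sInf {i | γ i = v}

private lemma feRk_spec {V : Type*} {γ : ℕ → V} {v : V} (h : ∃ i, γ i = v) :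
    γ (feRk γ v) = v := Nat.sInf_mem h

private lemma feRk_le {V : Type*} {γ : ℕ → V} {i : ℕ} {v : V} (h : γ i = v) :
    feRk γ v ≤ i := Nat.sInf_le h

private lemma feRk_min {V : Type*} {γ : ℕ → V} {v : V} {j : ℕ} (h : j < feRk γ v) :
    γ j ≠ v := Nat.notMem_of_lt_sInf h

private lemma feRk_eq {V : Type*} {γ : ℕ → V} {i : ℕ} (h : ∀ j < i, γ j ≠ γ i) :
    feRk γ (γ i) = i := by
  have h1 : feRk γ (γ i) ≤ i := feRk_le rfl
  rcases lt_or_eq_of_le h1 with hlt | he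
  · exact absurd (feRk_spec ⟨i, rfl⟩) (h _ hlt)
  · exact he

private lemma feRk_lt_of_ne {V : Type*} {γ : ℕ → V} {a u : V}
    (ha : ∃ i, γ i = a) (hu : ∃ i, γ i = u) (hne : a ≠ u) (hle : feRk γ a ≤ feRk γ u) :
    feRk γ a < feRk γ u :=
  lt_of_le_of_ne hle (fun h => hne (by rw [← feRk_spec ha, ← feRk_spec hu, h]))

/-- Every edge of the first-entrance tree joins a first-entrance vertex to its parent. -/
private lemma feAdj_cases {V : Type*} {γ : ℕ → V} {n : ℕ} {a b : V}
    (h : (edgeGraph (feTree γ n)).Adj a b) :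
    ∃ i, 0 < i ∧ i ≤ n ∧ feRk γ (γ i) = i ∧ feRk γ (γ (i - 1)) < i ∧
      ((a = γ (i - 1) ∧ b = γ i) ∨ (b = γ (i - 1) ∧ a = γ i)) := by
  obtain ⟨-, i, hi0, hin, hfirst, he⟩ := h
  refine ⟨i, hi0, hin, feRk_eq hfirst, lt_of_le_of_lt (feRk_le rfl) (by omega), ?_⟩
  rw [Sym2.eq_iff] at he
  tauto

/-- Uniqueness of the parent: a neighbor of smaller rank is the parent. -/
private lemma feParent_unique {V : Type*} {γ : ℕ → V} {n : ℕ} {a b : V}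
    (h : (edgeGraph (feTree γ n)).Adj a b) (hlt : feRk γ a < feRk γ b) :
    a = γ (feRk γ b - 1) := by
  obtain ⟨i, hi0, hin, hrk, hrk', hcase⟩ := feAdj_cases h
  rcases hcase with ⟨ha, hb⟩ | ⟨hb, ha⟩
  · subst ha; subst hb; rw [hrk]
  · subst ha; subst hb; rw [hrk] at hlt; omega

private lemma feAdj_mem {V : Type*} {γ : ℕ → V} {n : ℕ} {a b : V}
    (h : (edgeGraph (feTree γ n)).Adj a b) :
    (∃ i ≤ n, γ i = a) ∧ ∃ i ≤ n, γ i = b := by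
  obtain ⟨i, hi0, hin, hrk, hrk', hcase⟩ := feAdj_cases h
  rcases hcase with ⟨ha, hb⟩ | ⟨hb, ha⟩ <;>
    exact ⟨⟨_, by omega, ha.symm⟩, ⟨_, by omega, hb.symm⟩⟩

/-- Every visited vertex other than the start is joined to its parent in the tree. -/
private lemma feParent_adj {V : Type*} {γ : ℕ → V} {n : ℕ} {v : V}
    (hv : ∃ i ≤ n, γ i = v) (hvx : v ≠ γ 0) :
    0 < feRk γ v ∧ feRk γ v ≤ n ∧
      (edgeGraph (feTree γ n)).Adj (γ (feRk γ v - 1)) v := by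
  obtain ⟨i, hin, hiv⟩ := hv
  have hmem : γ (feRk γ v) = v := feRk_spec ⟨i, hiv⟩
  have hle : feRk γ v ≤ n := le_trans (feRk_le hiv) hin
  have hfirst : ∀ j < feRk γ v, γ j ≠ γ (feRk γ v) := by
    intro j hj; rw [hmem]; exact feRk_min hj
  have h0 : 0 < feRk γ v := by
    rcases Nat.eq_zero_or_pos (feRk γ v) with h | h
    · exact absurd (by rw [← hmem, h]) hvx
    · exact h
  refine ⟨h0, hle, ?_, ?_⟩
  · intro he; exact hfirst (feRk γ v - 1) (by omega) (by rw [hmem, he])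
  · exact ⟨feRk γ v, h0, hle, hfirst, by rw [hmem]⟩

/-- The first-entrance edges of a path form a spanning tree of the set of visited
vertices: the induced graph is connected and acyclic, i.e. a tree. -/
theorem stmt1 {V : Type*} [Fintype V] [DecidableEq V] (G : SimpleGraph V)
    (hconn : G.Connected) (x y : V) (n : ℕ) (γ : ℕ → V)
    (h0 : γ 0 = x) (hn : γ n = y)
    (hadj : ∀ i < n, G.Adj (γ i) (γ (i + 1))) :
    ((edgeGraph (feTree γ n)).induce {v | ∃ i ≤ n, γ i = v}).IsTree := by
  clear hconn hadj hn
  subst h0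
  set S : Set V := {v | ∃ i ≤ n, γ i = v} with hS
  set H : SimpleGraph V := edgeGraph (feTree γ n) with hH
  have hx : γ 0 ∈ S := ⟨0, Nat.zero_le n, rfl⟩
  constructor
  · -- Connected
    have key : ∀ k (v : V) (hv : v ∈ S), feRk γ v = k →
        (H.induce S).Reachable ⟨γ 0, hx⟩ ⟨v, hv⟩ := by
      intro k
      induction k using Nat.strong_induction_on with
      | _ k ih =>
        intro v hv hrk
        by_cases hvx : v = γ 0
        · have he : (⟨v, hv⟩ : S) = ⟨γ 0, hx⟩ := Subtype.ext hvx
          rw [he]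
        · obtain ⟨hpos, hlen, hadj'⟩ := feParent_adj hv hvx
          set p := γ (feRk γ v - 1) with hp
          have hpmem : p ∈ S := ⟨feRk γ v - 1, by omega, rfl⟩
          have hplt : feRk γ p < k := by
            have := feRk_le (v := p) rfl
            omega
          have hr := ih _ hplt p hpmem rfl
          have hstep : (H.induce S).Adj ⟨p, hpmem⟩ ⟨v, hv⟩ := hadj'
          exact hr.trans hstep.reachable
    have : Nonempty S := ⟨⟨γ 0, hx⟩⟩
    refine ⟨fun a b => ?_⟩
    exact (key _ a.1 a.2 rfl).symm.trans (key _ b.1 b.2 rfl)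
  · -- Acyclic
    intro w c hc
    have hinj : Function.Injective
        ((SimpleGraph.Embedding.induce S (G := H)).toHom) := Subtype.val_injective
    set c' := c.map (SimpleGraph.Embedding.induce S (G := H)).toHom with hc'def
    have hcyc : c'.IsCycle := hc.map hinj
    have hsupS : ∀ z ∈ c'.support, z ∈ S := by
      intro z hz
      rw [hc'def, SimpleGraph.Walk.support_map, List.mem_map] at hz
      obtain ⟨a, -, rfl⟩ := hz
      exact a.2
    obtain ⟨u, hu, hmax⟩ := Finset.exists_max_image c'.support.toFinset (feRk γ)
      ⟨_, List.mem_toFinset.mpr c'.start_mem_support⟩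
    rw [List.mem_toFinset] at hu
    have hmax' : ∀ z ∈ c'.support, feRk γ z ≤ feRk γ u := by
      intro z hz; exact hmax z (List.mem_toFinset.mpr hz)
    obtain ⟨c2, hc2, hsub⟩ : ∃ c2 : H.Walk u u, c2.IsCycle ∧
        ∀ z ∈ c2.support, z ∈ c'.support := by
      refine ⟨c'.rotate u hu, hcyc.rotate hu, ?_⟩
      intro z hz
      rw [SimpleGraph.Walk.support_eq_cons, List.mem_cons] at hz
      rcases hz with hz | hz
      · exact hz ▸ hu
      · have := (SimpleGraph.Walk.support_rotate c' u hu).mem_iff.mp hz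
        rw [SimpleGraph.Walk.support_eq_cons c']
        exact List.mem_cons_of_mem _ this
    clear hc hu hmax hcyc
    cases c2 with
    | nil => simpa using hc2.three_le_length
    | cons h q =>
      rename_i w1
      rw [SimpleGraph.Walk.cons_isCycle_iff] at hc2
      obtain ⟨hq, hedge⟩ := hc2
      have hw1 : w1 ∈ c'.support := hsub w1 (by simp)
      have hqnil : ¬ q.Nil := SimpleGraph.Walk.not_nil_of_ne h.ne'
      have hqrnil : ¬ q.reverse.Nil := SimpleGraph.Walk.not_nil_of_ne h.ne
      set w2 := q.reverse.getVert 1 with hw2def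
      have hadj2 : H.Adj u w2 := q.reverse.adj_snd hqrnil
      have hmemedge : s(u, w2) ∈ q.reverse.edges := by
        rw [← SimpleGraph.Walk.cons_tail_eq q.reverse hqrnil, SimpleGraph.Walk.edges_cons]
        exact List.mem_cons_self
      have hqedge : s(u, w2) ∈ q.edges := by
        rw [SimpleGraph.Walk.edges_reverse, List.mem_reverse] at hmemedge
        exact hmemedge
      have hne12 : w1 ≠ w2 := by
        intro he
        rw [← he] at hqedge
        exact hedge hqedge
      have hw2 : w2 ∈ c'.support := by
        have : w2 ∈ q.support := q.snd_mem_support_of_mem_edges hqedge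
        exact hsub w2 (by simp [this])
      -- both w1 and w2 have smaller rank than u, hence both equal the parent of u
      have huS : u ∈ S := hsupS u (hsub u (by simp))
      have hw1S : w1 ∈ S := hsupS w1 hw1
      have hw2S : w2 ∈ S := hsupS w2 hw2
      have hlt1 : feRk γ w1 < feRk γ u :=
        feRk_lt_of_ne (hw1S.imp fun i hi => hi.2) (huS.imp fun i hi => hi.2) h.ne'
          (hmax' w1 hw1)
      have hlt2 : feRk γ w2 < feRk γ u :=
        feRk_lt_of_ne (hw2S.imp fun i hi => hi.2) (huS.imp fun i hi => hi.2) hadj2.ne'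
          (hmax' w2 hw2)
      have e1 : w1 = γ (feRk γ u - 1) := feParent_unique h.symm hlt1
      have e2 : w2 = γ (feRk γ u - 1) := feParent_unique hadj2.symm hlt2
      exact hne12 (e1.trans e2.symm)
end

section
/- For a path γ of length n from x to y in a finite connected graph, the set of last-exit edges forms a spanning tree of the set of vertices visited by γ. -/
open scoped Classical

/-- The last-exit tree of a path of length `n`: for each vertex other than the end
that is visited, the (unoriented) edge by which it was last exited. -/
def leTree {V : Type*} (γ : ℕ → V) (n : ℕ) : Set (Sym2 V) :=
  {e | ∃ i < n, (∀ j ≤ n, i < j → γ j ≠ γ i) ∧ e = s(γ i, γ (i + 1))}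

section LeTreeAux
open SimpleGraph

lemma support_getElem_eq_getVert {V : Type*} {G : SimpleGraph V} {u v : V}
    (p : G.Walk u v) (i : ℕ) (hi : i < p.support.length) :
    p.support[i] = p.getVert i := by
  induction p generalizing i with
  | nil => simp at hi; subst hi; simp [Walk.getVert]
  | cons h q ih =>
    cases i with
    | zero => simp [Walk.getVert]
    | succ k =>
      simp only [Walk.support_cons, List.getElem_cons_succ, Walk.getVert_cons_succ]
      exact ih k (by simpa [Walk.support_cons] using hi)

lemma acyclic_of_parent {W : Type*} (H : SimpleGraph W) (r : W → ℕ) (par : W → W)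
    (hpar : ∀ a b, H.Adj a b → (b = par a ∧ r a < r b) ∨ (a = par b ∧ r b < r a)) :
    H.IsAcyclic := by
  intro v c hc
  classical
  obtain ⟨u, hu, hmin⟩ := Finset.exists_min_image c.support.toFinset r
    ⟨v, by simp [Walk.start_mem_support]⟩
  rw [List.mem_toFinset] at hu
  set c' := c.rotate u hu with hc'def
  have hcyc : c'.IsCycle := hc.rotate hu
  have hmin' : ∀ z ∈ c'.support, r u ≤ r z := by
    intro z hz
    rw [Walk.support_eq_cons] at hz
    rcases List.mem_cons.mp hz with rfl | hz
    · exact le_refl _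
    · have : z ∈ c.support.tail := (Walk.support_rotate c u hu).mem_iff.mp (by simpa using hz)
      exact hmin z (List.mem_toFinset.mpr (List.mem_of_mem_tail this))
  have hlen : 3 ≤ c'.length := hcyc.three_le_length
  have hslen : c'.support.length = c'.length + 1 := Walk.length_support c'
  have h1 : H.Adj u (c'.getVert 1) := by
    have := c'.adj_getVert_succ (i := 0) (by omega)
    rwa [c'.getVert_zero] at this
  have h2 : H.Adj (c'.getVert (c'.length - 1)) u := by
    have := c'.adj_getVert_succ (i := c'.length - 1) (by omega)
    rwa [show c'.length - 1 + 1 = c'.length by omega, c'.getVert_length] at this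
  have hne : c'.getVert 1 ≠ c'.getVert (c'.length - 1) := by
    intro heq
    have hnd : c'.support.tail.Nodup := hcyc.support_nodup
    have e1 : c'.support.tail[0]'(by simp [hslen]; omega) = c'.getVert 1 := by
      rw [List.getElem_tail]; exact support_getElem_eq_getVert c' 1 (by omega)
    have e2 : c'.support.tail[c'.length - 2]'(by simp [hslen]; omega) = c'.getVert (c'.length - 1) := by
      rw [List.getElem_tail]
      rw [support_getElem_eq_getVert c' (c'.length - 2 + 1) (by omega)]
      congr 1
      omega
    have : (0 : ℕ) = c'.length - 2 := by
      have := List.Nodup.getElem_inj_iff hnd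
        (i := 0) (hi := by simp [hslen]; omega)
        (j := c'.length - 2) (hj := by simp [hslen]; omega)
      exact this.mp (by rw [e1, e2, heq])
    omega
  have hw1 : c'.getVert 1 = par u := by
    rcases hpar u (c'.getVert 1) h1 with ⟨h, _⟩ | ⟨_, hlt⟩
    · exact h
    · exact absurd (hmin' _ (Walk.mem_support_iff_exists_getVert.mpr ⟨1, rfl, by omega⟩)) (by omega)
  have hw2 : c'.getVert (c'.length - 1) = par u := by
    rcases hpar (c'.getVert (c'.length - 1)) u h2 with ⟨_, hlt⟩ | ⟨h, _⟩
    · exact absurd (hmin' _ (Walk.mem_support_iff_exists_getVert.mpr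
        ⟨c'.length - 1, rfl, by omega⟩)) (by omega)
    · exact h
  exact hne (hw1.trans hw2.symm)

end LeTreeAux

/-- The last-exit edges of a path form a spanning tree of the set of visited
vertices: the induced graph is connected and acyclic, i.e. a tree. -/

theorem stmt2 {V : Type*} [Fintype V] [DecidableEq V] (G : SimpleGraph V)
    (hconn : G.Connected) (x y : V) (n : ℕ) (γ : ℕ → V)
    (h0 : γ 0 = x) (hn : γ n = y)
    (hadj : ∀ i < n, G.Adj (γ i) (γ (i + 1))) :
    ((edgeGraph (leTree γ n)).induce {v | ∃ i ≤ n, γ i = v}).IsTree := by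
  classical
  set S : Set V := {v | ∃ i ≤ n, γ i = v} with hS
  set ℓ : V → ℕ := fun v => Nat.findGreatest (fun i => γ i = v) n with hℓ
  have hℓle : ∀ v, ℓ v ≤ n := fun v => Nat.findGreatest_le n
  have hγℓ : ∀ v ∈ S, γ (ℓ v) = v := by
    rintro v ⟨i, hi, rfl⟩
    exact Nat.findGreatest_spec (P := fun j => γ j = γ i) hi rfl
  have hmax : ∀ v, ∀ j ≤ n, ℓ v < j → γ j ≠ v := by
    intro v j hj hlt
    exact Nat.findGreatest_is_greatest hlt hj
  have hmem : ∀ i ≤ n, γ i ∈ S := fun i hi => ⟨i, hi, rfl⟩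
  have hge : ∀ i ≤ n, i ≤ ℓ (γ i) := fun i hi => Nat.le_findGreatest hi rfl
  -- the parent function
  set par : ↥S → ↥S := fun v =>
    if h : ℓ v.val < n then ⟨γ (ℓ v.val + 1), hmem _ h⟩ else v with hpardef
  have hrank : ∀ a b : ↥S,
      ((edgeGraph (leTree γ n)).induce S).Adj a b →
      (b = par a ∧ ℓ a.val < ℓ b.val) ∨ (a = par b ∧ ℓ b.val < ℓ a.val) := by
    rintro a b ⟨hne, i, hin, hlast, he⟩
    have key : ∀ p q : ↥S, p.val = γ i → q.val = γ (i + 1) →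
        (∀ j ≤ n, i < j → γ j ≠ γ i) → q = par p ∧ ℓ p.val < ℓ q.val := by
      intro p q hp hq hl
      have hℓp : ℓ p.val = i := by
        have h1 : i ≤ ℓ p.val := hp ▸ hge i (le_of_lt hin)
        have h2 : ¬ i < ℓ p.val := fun hlt =>
          hl (ℓ p.val) (hℓle _) hlt (by rw [hγℓ p.val p.2, hp])
        omega
      have hq' : i + 1 ≤ ℓ q.val := hq ▸ hge (i + 1) hin
      constructor
      · apply Subtype.ext
        rw [hpardef]
        simp only [hℓp, hin, dif_pos]
        exact hq
      · omega
    rcases Sym2.eq_iff.mp he with ⟨ha, hb⟩ | ⟨ha, hb⟩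
    · exact Or.inl (key a b ha hb hlast)
    · exact Or.inr (key b a hb ha hlast)
  have hacy : ((edgeGraph (leTree γ n)).induce S).IsAcyclic :=
    acyclic_of_parent _ (fun v => ℓ v.val) par hrank
  -- connectivity
  have hroot : γ n ∈ S := hmem n le_rfl
  have hreach : ∀ v : ↥S, ((edgeGraph (leTree γ n)).induce S).Reachable v ⟨γ n, hroot⟩ := by
    have key : ∀ k, ∀ v : ↥S, n - ℓ v.val ≤ k →
        ((edgeGraph (leTree γ n)).induce S).Reachable v ⟨γ n, hroot⟩ := by
      intro k
      induction k with
      | zero =>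
        intro v h
        have : ℓ v.val = n := by have := hℓle v.val; omega
        have : v = (⟨γ n, hroot⟩ : ↥S) := Subtype.ext (by rw [← hγℓ v.val v.2, this])
        rw [this]
      | succ k ih =>
        intro v h
        by_cases hv : ℓ v.val < n
        · have hγv := hγℓ v.val v.2
          have hadjv : G.Adj (γ (ℓ v.val)) (γ (ℓ v.val + 1)) := hadj _ hv
          have hne : v.val ≠ γ (ℓ v.val + 1) := by
            rw [hγv] at hadjv; exact hadjv.ne
          have hedge : ((edgeGraph (leTree γ n)).induce S).Adj v ⟨γ (ℓ v.val + 1), hmem _ hv⟩ := by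
            refine ⟨hne, ℓ v.val, hv, ?_, ?_⟩
            · intro j hj hlt
              rw [hγv]
              exact hmax v.val j hj hlt
            · rw [hγv]; rfl
          have hstep : n - ℓ (γ (ℓ v.val + 1)) ≤ k := by
            have := hge (ℓ v.val + 1) hv
            omega
          exact (hedge.reachable).trans (ih _ hstep)
        · have : ℓ v.val = n := by have := hℓle v.val; omega
          have : v = (⟨γ n, hroot⟩ : ↥S) := Subtype.ext (by rw [← hγℓ v.val v.2, this])
          rw [this]
    intro v
    exact key (n - ℓ v.val) v le_rfl
  have : Nonempty ↥S := ⟨⟨γ n, hroot⟩⟩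
  exact ⟨⟨fun a b => (hreach a).trans (hreach b).symm⟩, hacy⟩
end

section
/- In a balanced multi-digraph D with start x and end y admitting an Eulerian path, the following traversal produces an Eulerian path from x to y: fix, for each vertex v, a linear ordering of its outgoing edges whose maximum element is the edge of a fixed arborescence of in-tree edges directed toward y; starting at x, repeatedly leave the current vertex by the smallest unused outgoing edge; then this process uses every edge exactly once and terminates at y. -/
open scoped Classical

/-- Indegree of `v` in the multi-digraph with edge type `E` and target map `tgt`. -/
def indeg {V E : Type*} [Fintype E] [DecidableEq V] (tgt : E → V) (v : V) : ℕ :=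
  (Finset.univ.filter fun e => tgt e = v).card

/-- Outdegree of `v` in the multi-digraph with edge type `E` and source map `src`. -/
def outdeg {V E : Type*} [Fintype E] [DecidableEq V] (src : E → V) (v : V) : ℕ :=
  (Finset.univ.filter fun e => src e = v).card

/-- The multi-digraph is balanced with start `x` and end `y`. -/
def BalancedDigraph {V E : Type*} [Fintype E] [DecidableEq V] (src tgt : E → V) (x y : V) : Prop :=
  outdeg src x = indeg tgt x + 1 ∧ indeg tgt y = outdeg src y + 1 ∧
    ∀ v, v ≠ x → v ≠ y → indeg tgt v = outdeg src v

/-- `p` is an Eulerian path from `x` to `y`: an enumeration of all edges, consecutively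
concatenated, starting at `x` and ending at `y`. -/
def IsEulerianPath {V E : Type*} [Fintype E] (src tgt : E → V) (x y : V)
    (p : Fin (Fintype.card E) → E) : Prop :=
  Function.Bijective p ∧
    (∀ h : 0 < Fintype.card E,
      src (p ⟨0, h⟩) = x ∧ tgt (p ⟨Fintype.card E - 1, by omega⟩) = y) ∧
    ∀ i, ∀ h : i + 1 < Fintype.card E, tgt (p ⟨i, by omega⟩) = src (p ⟨i + 1, h⟩)


/-- in a balanced multi-digraph with start `x` and end `y` that admits an
Eulerian path, fix a rank function `r` that linearly orders the outgoing edges at each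
vertex in such a way that the darkest (maximal) outgoing edge at each vertex `v ≠ y`
belongs to a fixed spanning arborescence `A` directed toward `y`.  Then any trail from
`x` that always leaves the current vertex by the lightest unused outgoing edge, and that
cannot be extended, uses every edge exactly once and terminates at `y`. -/
theorem stmt7 {V E : Type*} [Fintype V] [Fintype E] [DecidableEq V] [DecidableEq E]
    (src tgt : E → V) (x y : V) (hxy : x ≠ y)
    (hbal : BalancedDigraph src tgt x y)
    (hex : ∃ p, IsEulerianPath src tgt x y p)
    (r : E → ℕ)
    (hr : ∀ e e', src e = src e' → r e = r e' → e = e')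
    (A : Set E)
    (hA : (∀ e ∈ A, src e ≠ y) ∧ (∀ v, v ≠ y → ∃! e, e ∈ A ∧ src e = v) ∧
      ∀ v, Relation.ReflTransGen (fun a b => ∃ e ∈ A, src e = a ∧ tgt e = b) v y)
    (hdark : ∀ e ∈ A, ∀ e', src e' = src e → r e' ≤ r e)
    (m : ℕ) (p : Fin m → E) (vtx : Fin (m + 1) → V)
    (hinj : Function.Injective p)
    (hv0 : vtx 0 = x)
    (hstep : ∀ i : Fin m, src (p i) = vtx i.castSucc ∧ tgt (p i) = vtx i.succ)
    (hgreedy : ∀ i : Fin m, ∀ e, src e = vtx i.castSucc →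
      (∀ j, j < i → p j ≠ e) → r (p i) ≤ r e)
    (hmax : ∀ e, src e = vtx (Fin.last m) → ∃ i, p i = e) :
    m = Fintype.card E ∧ vtx (Fin.last m) = y := by
  classical
  obtain ⟨hx, hy, hbal'⟩ := hbal
  obtain ⟨hAy, hAuniq, hAreach⟩ := hA
  -- counting functions
  set cntOut : V → ℕ :=
    fun v => (Finset.univ.filter fun i : Fin m => vtx i.castSucc = v).card with hcntOut
  set cntIn : V → ℕ :=
    fun v => (Finset.univ.filter fun i : Fin m => vtx i.succ = v).card with hcntIn
  -- fundamental counting identity along the trail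
  have key : ∀ v, cntOut v + (if vtx (Fin.last m) = v then 1 else 0)
      = (if x = v then 1 else 0) + cntIn v := by
    intro v
    have h1 := Fin.sum_univ_castSucc (f := fun j : Fin (m+1) => if vtx j = v then (1:ℕ) else 0)
    have h2 := Fin.sum_univ_succ (f := fun j : Fin (m+1) => if vtx j = v then (1:ℕ) else 0)
    simp only [hcntOut, hcntIn, Finset.card_filter]
    rw [hv0] at h2
    exact h1.symm.trans h2
  -- cntOut is at most the outdegree
  have cntOut_le : ∀ v, cntOut v ≤ outdeg src v := by
    intro v
    apply Finset.card_le_card_of_injOn p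
    · intro i hi
      simp only [Finset.mem_coe, Finset.mem_filter, Finset.mem_univ, true_and] at hi ⊢
      rw [(hstep i).1, hi]
    · intro i _ j _ h; exact hinj h
  -- cntIn is at most the indegree
  have cntIn_le : ∀ v, cntIn v ≤ indeg tgt v := by
    intro v
    apply Finset.card_le_card_of_injOn p
    · intro i hi
      simp only [Finset.mem_coe, Finset.mem_filter, Finset.mem_univ, true_and] at hi ⊢
      rw [(hstep i).2, hi]
    · intro i _ j _ h; exact hinj h
  -- if all out-edges at v are used, outdeg v ≤ cntOut v
  have out_all : ∀ v, (∀ e, src e = v → ∃ i, p i = e) → outdeg src v ≤ cntOut v := by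
    intro v hall
    have hsub : (Finset.univ.filter fun e => src e = v) ⊆
        (Finset.univ.filter fun i : Fin m => vtx i.castSucc = v).image p := by
      intro e he
      simp only [Finset.mem_filter, Finset.mem_univ, true_and] at he
      obtain ⟨i, hi⟩ := hall e he
      simp only [Finset.mem_image, Finset.mem_filter, Finset.mem_univ, true_and]
      exact ⟨i, by rw [← (hstep i).1, hi, he], hi⟩
    calc outdeg src v ≤ _ := Finset.card_le_card hsub
      _ = cntOut v := Finset.card_image_of_injective _ hinj
  -- if some in-edge at v is unused, cntIn v < indeg v
  have in_lt : ∀ v t, tgt t = v → (∀ i, p i ≠ t) → cntIn v < indeg tgt v := by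
    intro v t htv htu
    have himg : (Finset.univ.filter fun i : Fin m => vtx i.succ = v).image p ⊂
        Finset.univ.filter fun e => tgt e = v := by
      constructor
      · intro e he
        simp only [Finset.mem_image, Finset.mem_filter, Finset.mem_univ, true_and] at he ⊢
        obtain ⟨i, hi, rfl⟩ := he
        rw [(hstep i).2, hi]
      · intro hsub
        have : t ∈ (Finset.univ.filter fun i : Fin m => vtx i.succ = v).image p :=
          hsub (by simp [htv])
        simp only [Finset.mem_image, Finset.mem_filter, Finset.mem_univ, true_and] at this
        obtain ⟨i, -, hi⟩ := this
        exact htu i hi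
    calc cntIn v = _ := (Finset.card_image_of_injective _ hinj).symm
      _ < indeg tgt v := Finset.card_lt_card himg
  -- Step 1: the trail ends at y
  have hzy : vtx (Fin.last m) = y := by
    by_contra hne
    have h1 := out_all _ hmax
    have h2 := cntOut_le (vtx (Fin.last m))
    have h3 := cntIn_le (vtx (Fin.last m))
    have hk := key (vtx (Fin.last m))
    rw [if_pos rfl] at hk
    by_cases hzx : vtx (Fin.last m) = x
    · rw [if_pos hzx.symm] at hk
      rw [hzx] at h1 h2 h3 hk
      omega
    · rw [if_neg (fun h => hzx h.symm)] at hk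
      have := hbal' _ hzx hne
      omega
  -- unused tree edges propagate toward y through unused edges
  set P : V → Prop := fun v => ∃ e, src e = v ∧ ∀ i, p i ≠ e with hP
  have hPy : ¬ P y := by
    rintro ⟨e, hse, hun⟩
    obtain ⟨i, hi⟩ := hmax e (by rw [hse, hzy])
    exact hun i hi
  have main : ∀ v, Relation.ReflTransGen (fun a b => ∃ e ∈ A, src e = a ∧ tgt e = b) v y
      → ¬ P v := by
    intro v h
    induction h using Relation.ReflTransGen.head_induction_on with
    | refl => exact hPy
    | head hab _ ih =>
      rename_i a c _
      rintro ⟨e, hse, hun⟩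
      obtain ⟨t, htA, hts, htt⟩ := hab
      -- the tree edge t at a is unused
      have htu : ∀ i, p i ≠ t := by
        intro i hit
        have hsrc_i : vtx i.castSucc = a := by rw [← (hstep i).1, hit, hts]
        have hg := hgreedy i e (by rw [hsrc_i, hse]) (fun j _ => hun j)
        have hd : r e ≤ r (p i) := by
          rw [hit]; exact hdark t htA e (by rw [hse, hts])
        have hee : e = p i := hr e (p i) (by rw [hse, (hstep i).1, hsrc_i]) (le_antisymm hd hg)
        exact hun i hee.symm
      -- hence c has an unused in-edge, so (if c ≠ y) an unused out-edge
      have hlt := in_lt c t htt htu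
      by_cases hcy : c = y
      · -- contradiction: all out-edges at y are used
        rw [hcy] at hlt
        have h1 := out_all _ hmax
        have h2 := cntOut_le (vtx (Fin.last m))
        have hk := key (vtx (Fin.last m))
        rw [if_pos rfl, if_neg (by rw [hzy]; exact hxy)] at hk
        rw [hzy] at h1 h2 hk
        omega
      · apply ih
        by_contra hc
        have hall : ∀ e, src e = c → ∃ i, p i = e := by
          intro e' he'
          by_contra hne2
          push_neg at hne2
          exact hc ⟨e', he', hne2⟩
        have h4 := out_all c hall
        have hk := key c
        rw [if_neg (fun h => hcy (h.symm.trans hzy))] at hk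
        by_cases hcx : c = x
        · rw [if_pos hcx.symm, hcx] at hk
          rw [hcx] at hlt h4
          have h2 := cntOut_le x
          omega
        · rw [if_neg (fun h => hcx h.symm)] at hk
          have := hbal' c hcx hcy
          have h2 := cntOut_le c
          omega
  -- Step 2: m = card E
  have hm_le : m ≤ Fintype.card E := by
    simpa using Fintype.card_le_of_injective p hinj
  refine ⟨?_, hzy⟩
  by_contra hne
  have hcard : (Finset.univ.image p).card < (Finset.univ : Finset E).card := by
    rw [Finset.card_image_of_injective _ hinj]
    simp only [Finset.card_univ, Fintype.card_fin]
    omega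
  have hun : ∃ e, ∀ i, p i ≠ e := by
    obtain ⟨e0, -, he0⟩ : ∃ e ∈ Finset.univ, e ∉ Finset.univ.image p := by
      by_contra hc2
      push_neg at hc2
      exact absurd (Finset.card_le_card fun e he => hc2 e he) (not_le.mpr hcard)
    exact ⟨e0, fun i hi => he0 (hi ▸ Finset.mem_image_of_mem p (Finset.mem_univ i))⟩
  obtain ⟨e0, he0⟩ := hun
  exact main (src e0) (hAreach (src e0)) ⟨e0, rfl, he0⟩
end

section
/- For an irreducible Markov chain with transition matrix P and stationary distribution π on a finite state space, for any two states x and y, π(y) · det((I−P)[x]) = π(x) · det((I−P)[y]), where (I−P)[z] denotes the matrix I−P with the row and column indexed by z deleted. -/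
open scoped Classical

/-- The matrix `M` with the rows and columns indexed by elements of `S` deleted. -/
def delMat {V : Type*} (M : Matrix V V ℝ) (S : Set V) :
    Matrix {v : V // v ∉ S} {v : V // v ∉ S} ℝ :=
  M.submatrix Subtype.val Subtype.val

section Aux

variable {V : Type*} [Fintype V] [DecidableEq V]

/-- Maximum principle: a harmonic function of an irreducible stochastic matrix is constant. -/
lemma harmonic_const (P : Matrix V V ℝ) (hnn : ∀ u v, 0 ≤ P u v)
    (hrow : ∀ u, ∑ v, P u v = 1)
    (hirr : ∀ u v, Relation.ReflTransGen (fun a b => 0 < P a b) u v)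
    (f : V → ℝ) (hf : P.mulVec f = f) (a b : V) : f a = f b := by
  obtain ⟨u₀, -, hmax⟩ := Finset.exists_max_image Finset.univ f ⟨a, Finset.mem_univ a⟩
  have key : ∀ c, f c = f u₀ → ∀ b', 0 < P c b' → f b' = f u₀ := by
    intro c hc b' hpb
    by_contra hne
    have hlt : f b' < f u₀ := lt_of_le_of_ne (hmax b' (Finset.mem_univ _)) hne
    have h1 : f c = ∑ w, P c w * f w := by
      have := congrFun hf c
      simp only [Matrix.mulVec, dotProduct] at this
      exact this.symm
    have h2 : ∑ w, P c w * f w < ∑ w, P c w * f u₀ := by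
      refine Finset.sum_lt_sum (fun w _ => ?_) ⟨b', Finset.mem_univ _, ?_⟩
      · exact mul_le_mul_of_nonneg_left (hmax w (Finset.mem_univ _)) (hnn c w)
      · exact mul_lt_mul_of_pos_left hlt hpb
    have h3 : ∑ w, P c w * f u₀ = f u₀ := by
      rw [← Finset.sum_mul, hrow, one_mul]
    rw [← h1, hc, h3] at h2
    exact lt_irrefl _ h2
  have hall : ∀ b', f b' = f u₀ := by
    intro b'
    induction hirr u₀ b' with
    | refl => rfl
    | tail _ hstep ih => exact key _ ih _ hstep
  rw [hall a, hall b]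

/-- The diagonal entries of the adjugate are the determinants of the minors. -/
lemma adjugate_diag_eq (A : Matrix V V ℝ) (z : V) :
    A.adjugate z z = (delMat A {z}).det := by
  rw [Matrix.adjugate_apply]
  set M : Matrix V V ℝ := A.updateRow z (Pi.single z 1) with hM
  let p : V → Prop := fun v => v ∉ ({z} : Set V)
  let e : {v // p v} ⊕ {v // ¬ p v} ≃ V := Equiv.sumCompl p
  rw [← Matrix.det_submatrix_equiv_self e M]
  have hblock : M.submatrix e e =
      Matrix.fromBlocks (delMat A {z})
        (Matrix.of fun (v : {v // p v}) (w : {v // ¬ p v}) => A v.val w.val) 0 1 := by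
    ext i j
    rcases i with i | i <;> rcases j with j | j
    · have hi : (i : V) ≠ z := by
        have := i.prop; simpa [p, Set.mem_singleton_iff] using this
      simp [e, hM, Matrix.updateRow_apply, hi, delMat, Matrix.fromBlocks]
    · have hi : (i : V) ≠ z := by
        have := i.prop; simpa [p, Set.mem_singleton_iff] using this
      simp [e, hM, Matrix.updateRow_apply, hi, Matrix.fromBlocks]
    · have hi : (i : V) = z := by
        have := i.prop; simpa [p, Set.mem_singleton_iff, not_not] using this
      have hj : (j : V) ≠ z := by
        have := j.prop; simpa [p, Set.mem_singleton_iff] using this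
      simp [e, hM, Matrix.updateRow_apply, hi, Matrix.fromBlocks,
        Pi.single_eq_of_ne hj]
    · have hi : (i : V) = z := by
        have := i.prop; simpa [p, Set.mem_singleton_iff, not_not] using this
      have hj : (j : V) = z := by
        have := j.prop; simpa [p, Set.mem_singleton_iff, not_not] using this
      have hij : i = j := Subtype.ext (by rw [hi, hj])
      simp [e, hM, Matrix.updateRow_apply, hi, hj, hij, Matrix.fromBlocks,
        Matrix.one_apply]
  rw [hblock, Matrix.det_fromBlocks_zero₂₁, Matrix.det_one, mul_one]

end Aux

/-- for an irreducible Markov chain with transition matrix `P` and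
stationary distribution `π`, for any two states `x` and `y`,
`π(y) · det((I−P)[x]) = π(x) · det((I−P)[y])`, where `(I−P)[z]` is `I−P` with the row
and column of `z` deleted. -/
theorem stmt13 {V : Type*} [Fintype V] [DecidableEq V]
    (P : Matrix V V ℝ) (hnn : ∀ u v, 0 ≤ P u v) (hrow : ∀ u, ∑ v, P u v = 1)
    (hirr : ∀ u v, Relation.ReflTransGen (fun a b => 0 < P a b) u v)
    (π : V → ℝ) (hπnn : ∀ v, 0 ≤ π v) (hπ1 : ∑ v, π v = 1)
    (hπ : ∀ v, π v = ∑ u, π u * P u v)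
    (x y : V) :
    π y * (delMat (1 - P) {x}).det = π x * (delMat (1 - P) {y}).det := by
  classical
  have hne : Nonempty V := ⟨x⟩
  set A : Matrix V V ℝ := 1 - P with hA
  have hones_ne : (fun _ : V => (1:ℝ)) ≠ 0 := by
    intro h
    have := congrFun h x
    simp at this
  have hones : A.mulVec (fun _ => (1:ℝ)) = 0 := by
    funext u
    simp only [hA, Matrix.sub_mulVec, Pi.sub_apply, Matrix.one_mulVec]
    have : P.mulVec (fun _ => (1:ℝ)) u = 1 := by
      simp [Matrix.mulVec, dotProduct, hrow u]
    simp [this]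
  have hdet : A.det = 0 := by
    rw [← Matrix.exists_mulVec_eq_zero_iff]
    exact ⟨fun _ => (1:ℝ), hones_ne, hones⟩
  have hharm : ∀ f : V → ℝ, A.mulVec f = 0 → ∀ a b, f a = f b := by
    intro f hf
    apply harmonic_const P hnn hrow hirr
    have := hf
    rw [hA, Matrix.sub_mulVec, Matrix.one_mulVec, sub_eq_zero] at this
    exact this.symm
  set d : V → ℝ := fun z => A.adjugate z z with hd
  have hcol : ∀ i k, A.adjugate i k = d k := by
    intro i k
    refine hharm (fun j => A.adjugate j k) ?_ i k
    have hmul : A * A.adjugate = 0 := by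
      rw [Matrix.mul_adjugate, hdet, zero_smul]
    funext u
    have := congrFun (congrFun hmul u) k
    simpa [Matrix.mul_apply, Matrix.mulVec, dotProduct] using this
  have hdA : Matrix.vecMul d A = 0 := by
    have hmul : A.adjugate * A = 0 := by
      rw [Matrix.adjugate_mul, hdet, zero_smul]
    funext k
    have := congrFun (congrFun hmul x) k
    simp only [Matrix.mul_apply, Matrix.zero_apply] at this
    simp only [Matrix.vecMul, dotProduct, Pi.zero_apply]
    calc ∑ j, d j * A j k = ∑ j, A.adjugate x j * A j k := by
          refine Finset.sum_congr rfl fun j _ => ?_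
          rw [hcol x j]
      _ = 0 := this
  have hπA : Matrix.vecMul π A = 0 := by
    funext k
    simp only [Matrix.vecMul, dotProduct, Pi.zero_apply, hA,
      Matrix.sub_apply, Matrix.one_apply, mul_sub, Finset.sum_sub_distrib,
      mul_ite, mul_one, mul_zero, Finset.sum_ite_eq', Finset.mem_univ, if_true]
    rw [← hπ k]
    ring
  set K := LinearMap.ker A.transpose.mulVecLin with hK
  have hmem : ∀ v : V → ℝ, Matrix.vecMul v A = 0 → v ∈ K := by
    intro v hv
    rw [hK, LinearMap.mem_ker, Matrix.mulVecLin_apply, Matrix.mulVec_transpose, hv]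
  have hπK : π ∈ K := hmem π hπA
  have hdK : d ∈ K := hmem d hdA
  have hker : LinearMap.ker A.mulVecLin = Submodule.span ℝ {fun _ : V => (1:ℝ)} := by
    apply le_antisymm
    · intro f hf
      rw [LinearMap.mem_ker, Matrix.mulVecLin_apply] at hf
      have hconst := hharm f hf
      obtain ⟨v₀⟩ := hne
      have hfv : f = (f v₀) • (fun _ : V => (1:ℝ)) := by
        funext b
        simp [hconst b v₀]
      rw [hfv]
      exact Submodule.smul_mem _ _ (Submodule.mem_span_singleton_self _)
    · rw [Submodule.span_le, Set.singleton_subset_iff]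
      rw [SetLike.mem_coe, LinearMap.mem_ker, Matrix.mulVecLin_apply]
      exact hones
  have h1 : Module.finrank ℝ (LinearMap.ker A.mulVecLin) = 1 := by
    rw [hker]
    exact finrank_span_singleton hones_ne
  have hcard : Module.finrank ℝ (V → ℝ) = Fintype.card V :=
    Module.finrank_fintype_fun_eq_card ℝ
  have hrk1 := LinearMap.finrank_range_add_finrank_ker A.mulVecLin
  have hrk2 := LinearMap.finrank_range_add_finrank_ker A.transpose.mulVecLin
  rw [hcard, h1] at hrk1
  rw [hcard] at hrk2
  have hrT : A.transpose.rank = A.rank := Matrix.rank_transpose A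
  have hKrank : Module.finrank ℝ K = 1 := by
    have e1 : A.rank + 1 = Fintype.card V := hrk1
    have e2 : A.transpose.rank + Module.finrank ℝ K = Fintype.card V := hrk2
    rw [hrT] at e2
    omega
  have hπ0 : π ≠ 0 := by
    intro h
    rw [h] at hπ1
    simp at hπ1
  have hspan : Submodule.span ℝ {π} = K := by
    apply Submodule.eq_of_le_of_finrank_eq
    · rw [Submodule.span_le, Set.singleton_subset_iff]
      exact hπK
    · rw [finrank_span_singleton hπ0, hKrank]
  obtain ⟨c, hc⟩ := Submodule.mem_span_singleton.mp (hspan ▸ hdK)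
  have hdx : d x = c * π x := by rw [← hc]; simp
  have hdy : d y = c * π y := by rw [← hc]; simp
  have ex : (delMat A {x}).det = d x := (adjugate_diag_eq A x).symm
  have ey : (delMat A {y}).det = d y := (adjugate_diag_eq A y).symm
  rw [ex, ey, hdx, hdy]
  ring
end

section
/- (Green function via Cramer's rule) For an irreducible Markov chain with transition matrix P on a finite state space, a nonempty set Z of states, and a state a ∉ Z, the expected number of visits to a strictly before hitting Z, starting from a, equals det((I−P)[Z ∪ {a}]) / det((I−P)[Z]), where A[S] denotes deletion of the rows and columns indexed by S. -/
open scoped Classical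

/-- Extend a finite path `γ : Fin (n+1) → V` to a function `ℕ → V`. -/
def pad {V : Type*} {n : ℕ} (γ : Fin (n + 1) → V) : ℕ → V :=
  fun i => γ ⟨min i n, by omega⟩

/-- The Green function `G_Z(a, a)`: the expected number of visits to `a` strictly before
hitting `Z`, for the chain with transition probabilities `p` started at `a`. -/
noncomputable def green {V : Type*} [Fintype V] (p : V → V → ℝ) (Z : Set V) (a : V) : ℝ :=
  ∑' n : ℕ, ∑ γ : Fin (n + 1) → V,
    if pad γ 0 = a ∧ pad γ n = a ∧ ∀ i ≤ n, pad γ i ∉ Z then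
      ∏ k ∈ Finset.range n, p (pad γ k) (pad γ (k + 1)) else 0

/-! ### Auxiliary lemmas -/

lemma pathsum {W : Type*} [Fintype W] [DecidableEq W] (Q : Matrix W W ℝ) (n : ℕ) (x y : W) :
    (Q ^ n) x y = ∑ γ : Fin (n + 1) → W,
      if γ 0 = x ∧ γ (Fin.last n) = y then
        ∏ k : Fin n, Q (γ k.castSucc) (γ k.succ) else 0 := by
  induction n generalizing x with
  | zero =>
      rw [Fintype.sum_equiv (Equiv.funUnique (Fin 1) W)
        _ (fun w : W => if w = x ∧ w = y then (1:ℝ) else 0) (by intro γ; simp [Fin.last])]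
      have : ∀ w : W, (if w = x ∧ w = y then (1:ℝ) else 0)
          = if w = x then (if x = y then 1 else 0) else 0 := by
        intro w; by_cases h : w = x <;> simp [h]
      simp only [this, Finset.sum_ite_eq' Finset.univ x, Finset.mem_univ, if_true]
      simp [Matrix.one_apply]
  | succ n ih =>
      have key : ∀ z : W, ∀ δ : Fin (n+1) → W,
          (if (Fin.cons z δ : Fin (n+2) → W) 0 = x ∧
              (Fin.cons z δ : Fin (n+2) → W) (Fin.last (n+1)) = y then
            ∏ k : Fin (n+1), Q ((Fin.cons z δ : Fin (n+2) → W) k.castSucc)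
              ((Fin.cons z δ : Fin (n+2) → W) k.succ) else 0)
          = if z = x ∧ δ (Fin.last n) = y then
              Q z (δ 0) * ∏ k : Fin n, Q (δ k.castSucc) (δ k.succ) else 0 := by
        intro z δ
        have h0 : (Fin.cons z δ : Fin (n+2) → W) 0 = z := rfl
        have hl : (Fin.cons z δ : Fin (n+2) → W) (Fin.last (n+1)) = δ (Fin.last n) := by
          rw [← Fin.succ_last, Fin.cons_succ]
        rw [h0, hl]
        congr 1
        rw [Fin.prod_univ_succ]
        simp [← Fin.succ_castSucc]
      rw [← Fintype.sum_equiv (Fin.consEquiv (fun _ : Fin (n+2) => W))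
        (fun p : W × (Fin (n+1) → W) =>
          if p.1 = x ∧ p.2 (Fin.last n) = y then
            Q p.1 (p.2 0) * ∏ k : Fin n, Q (p.2 k.castSucc) (p.2 k.succ) else 0) _
        (by intro p; exact (key p.1 p.2).symm)]
      rw [Fintype.sum_prod_type, pow_succ', Matrix.mul_apply]
      rw [Finset.sum_comm]
      simp only [ih, Finset.mul_sum]
      rw [Finset.sum_comm]
      apply Finset.sum_congr rfl
      intro δ _
      by_cases hC : δ (Fin.last n) = y
      · simp only [hC, and_true]
        rw [Finset.sum_congr rfl (fun j _ => (mul_ite _ _ _ _).trans (by rw [mul_zero]))]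
        rw [Finset.sum_ite_eq Finset.univ (δ 0)
          (fun j => Q x j * ∏ k : Fin n, Q (δ k.castSucc) (δ k.succ))]
        rw [Finset.sum_ite_eq' Finset.univ x
          (fun z => Q z (δ 0) * ∏ k : Fin n, Q (δ k.castSucc) (δ k.succ))]
        simp
      · simp [hC]

lemma inner_eq {V : Type*} [Fintype V] [DecidableEq V] (P : Matrix V V ℝ)
    (Z : Set V) (a : V) (ha : a ∉ Z) (n : ℕ) :
    (∑ γ : Fin (n + 1) → V,
      if pad γ 0 = a ∧ pad γ n = a ∧ ∀ i ≤ n, pad γ i ∉ Z then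
        ∏ k ∈ Finset.range n, P (pad γ k) (pad γ (k + 1)) else 0)
    = ∑ δ : Fin (n + 1) → {v : V // v ∉ Z},
        if δ 0 = ⟨a, ha⟩ ∧ δ (Fin.last n) = ⟨a, ha⟩ then
          ∏ k : Fin n, P (δ k.castSucc : V) (δ k.succ : V) else 0 := by
  have hpad : ∀ (γ : Fin (n+1) → V) (i : Fin (n+1)), pad γ i.val = γ i := by
    intro γ i
    unfold pad
    congr 1
    exact Fin.ext (by simp [Nat.min_eq_left (Nat.lt_succ_iff.mp i.isLt)])
  rw [← Finset.sum_filter_of_ne (p := fun γ : Fin (n+1) → V => ∀ i, γ i ∉ Z)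
    (by intro γ _ hne
        by_contra hc; push_neg at hc
        obtain ⟨i, hi⟩ := hc
        apply hne
        rw [if_neg]
        rintro ⟨-, -, h3⟩
        exact (h3 i.val (Nat.lt_succ_iff.mp i.isLt)) (by rwa [hpad]))]
  refine Finset.sum_nbij'
      (i := fun (γ : Fin (n+1) → V) => fun k : Fin (n+1) =>
        if h : γ k ∉ Z then (⟨γ k, h⟩ : {v : V // v ∉ Z}) else ⟨a, ha⟩)
      (j := fun (δ : Fin (n+1) → {v : V // v ∉ Z}) => fun k : Fin (n+1) => (δ k : V))
      (fun _ _ => Finset.mem_univ _) ?_ ?_ ?_ ?_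
  · intro δ _
    simp only [Finset.mem_filter, Finset.mem_univ, true_and]
    exact fun k => (δ k).2
  · intro γ hγ
    rw [Finset.mem_filter] at hγ
    funext k
    simp [hγ.2 k]
  · intro δ _
    funext k
    simp [(δ k).2]
  · intro γ hγ
    rw [Finset.mem_filter] at hγ
    have hmem := hγ.2
    have e0 : pad γ 0 = γ 0 := by have := hpad γ 0; simpa using this
    have en : pad γ n = γ (Fin.last n) := by
      have := hpad γ (Fin.last n); simpa [Fin.last] using this
    have hcond : (pad γ 0 = a ∧ pad γ n = a ∧ ∀ i ≤ n, pad γ i ∉ Z)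
        ↔ (γ 0 = a ∧ γ (Fin.last n) = a) := by
      constructor
      · rintro ⟨h1, h2, -⟩; exact ⟨by rwa [e0] at h1, by rwa [en] at h2⟩
      · rintro ⟨h1, h2⟩
        refine ⟨by rwa [e0], by rwa [en], fun i hi => ?_⟩
        have : pad γ i = γ ⟨i, by omega⟩ := by
          have := hpad γ ⟨i, by omega⟩; simpa using this
        rw [this]; exact hmem _
    simp only [dif_pos (hmem _)]
    by_cases h : γ 0 = a ∧ γ (Fin.last n) = a
    · rw [if_pos (hcond.mpr h), if_pos (by simp [Subtype.ext_iff, h.1, h.2])]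
      rw [← Fin.prod_univ_eq_prod_range (fun k => P (pad γ k) (pad γ (k+1))) n]
      apply Finset.prod_congr rfl
      intro k _
      have h1 : pad γ (k : ℕ) = γ k.castSucc := by
        have := hpad γ k.castSucc; simpa using this
      have h2 : pad γ ((k : ℕ) + 1) = γ k.succ := by
        have := hpad γ k.succ; simpa using this
      rw [h1, h2]
    · rw [if_neg (fun hc => h (hcond.mp hc)), if_neg (by simpa [Subtype.ext_iff] using h)]

section core
variable {W : Type*} [Fintype W] [DecidableEq W] {Q : Matrix W W ℝ}

lemma pow_entry_nonneg (h0 : ∀ x y, 0 ≤ Q x y) : ∀ n x y, 0 ≤ (Q ^ n) x y := by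
  intro n
  induction n with
  | zero => intro x y; rw [pow_zero]; by_cases h : x = y <;> simp [Matrix.one_apply, h]
  | succ n ih =>
      intro x y
      rw [pow_succ, Matrix.mul_apply]
      exact Finset.sum_nonneg fun z _ => mul_nonneg (ih x z) (h0 z y)

lemma rowsum_pow_add (m n : ℕ) (x : W) :
    ∑ y, (Q ^ (m + n)) x y = ∑ z, (Q ^ m) x z * (∑ y, (Q ^ n) z y) := by
  rw [pow_add]
  simp only [Matrix.mul_apply, Finset.mul_sum]
  exact Finset.sum_comm

lemma rowsum_pow_le_one (h0 : ∀ x y, 0 ≤ Q x y) (h1 : ∀ x, ∑ y, Q x y ≤ 1) :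
    ∀ n x, ∑ y, (Q ^ n) x y ≤ 1 := by
  intro n
  induction n with
  | zero => intro x; simp [Matrix.one_apply]
  | succ n ih =>
      intro x
      have : (n + 1) = 1 + n := by omega
      rw [this, rowsum_pow_add 1 n x]
      calc ∑ z, (Q ^ 1) x z * (∑ y, (Q ^ n) z y)
          ≤ ∑ z, (Q ^ 1) x z * 1 := by
            apply Finset.sum_le_sum
            intro z _
            exact mul_le_mul_of_nonneg_left (ih z) (pow_entry_nonneg h0 1 x z)
        _ ≤ 1 := by simpa [pow_one] using h1 x

lemma rowsum_pow_mul_le (h0 : ∀ x y, 0 ≤ Q x y)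
    {m : ℕ} {θ : ℝ} (hθ0 : 0 ≤ θ) (hθ : ∀ x, ∑ y, (Q ^ m) x y ≤ θ) :
    ∀ q x, ∑ y, (Q ^ (m * q)) x y ≤ θ ^ q := by
  intro q
  induction q with
  | zero => intro x; simp [Matrix.one_apply]
  | succ q ih =>
      intro x
      have : m * (q + 1) = m + m * q := by ring
      rw [this, rowsum_pow_add m (m * q) x, pow_succ']
      calc ∑ z, (Q ^ m) x z * (∑ y, (Q ^ (m * q)) z y)
          ≤ ∑ z, (Q ^ m) x z * θ ^ q := by
            apply Finset.sum_le_sum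
            intro z _
            exact mul_le_mul_of_nonneg_left (ih z) (pow_entry_nonneg h0 m x z)
        _ = (∑ z, (Q ^ m) x z) * θ ^ q := by rw [Finset.sum_mul]
        _ ≤ θ * θ ^ q := mul_le_mul_of_nonneg_right (hθ x) (pow_nonneg hθ0 q)

lemma entry_le_geo (h0 : ∀ x y, 0 ≤ Q x y) (h1 : ∀ x, ∑ y, Q x y ≤ 1)
    {m : ℕ} {θ : ℝ} (hθ0 : 0 ≤ θ) (hθ : ∀ x, ∑ y, (Q ^ m) x y ≤ θ) :
    ∀ n x y, (Q ^ n) x y ≤ θ ^ (n / m) := by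
  intro n x y
  have h2 : (Q ^ n) x y ≤ ∑ y, (Q ^ n) x y :=
    Finset.single_le_sum (fun z _ => pow_entry_nonneg h0 n x z) (Finset.mem_univ y)
  have h3 : n = m * (n / m) + n % m := (Nat.div_add_mod n m).symm
  have h4 : ∑ y, (Q ^ n) x y ≤ ∑ y, (Q ^ (m * (n / m))) x y := by
    conv_lhs => rw [h3]
    rw [rowsum_pow_add]
    calc ∑ z, (Q ^ (m * (n/m))) x z * (∑ y, (Q ^ (n % m)) z y)
        ≤ ∑ z, (Q ^ (m * (n/m))) x z * 1 := by
          apply Finset.sum_le_sum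
          intro z _
          exact mul_le_mul_of_nonneg_left (rowsum_pow_le_one h0 h1 _ z)
            (pow_entry_nonneg h0 _ x z)
      _ = _ := by simp
  exact le_trans h2 (le_trans h4 (rowsum_pow_mul_le h0 hθ0 hθ _ x))

lemma sum_pow_div_le {θ : ℝ} (hθ0 : 0 ≤ θ) (hθ1 : θ < 1) {m : ℕ} (hm : 0 < m) (N : ℕ) :
    ∑ k ∈ Finset.range N, θ ^ (k / m) ≤ (m : ℝ) * (1 - θ)⁻¹ := by
  rw [Finset.sum_comp (fun q => θ ^ q) (fun k => k / m)]
  have hcard : ∀ b, ((Finset.range N).filter (fun k => k / m = b)).card ≤ m := by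
    intro b
    have hsub : (Finset.range N).filter (fun k => k / m = b) ⊆ Finset.Ico (b * m) (b * m + m) := by
      intro k hk
      simp only [Finset.mem_filter, Finset.mem_range] at hk
      have h1 := Nat.div_add_mod k m
      have h2 : k % m < m := Nat.mod_lt _ hm
      rw [Finset.mem_Ico]
      obtain ⟨hk1, hk2⟩ := hk
      rw [← hk2, Nat.mul_comm (k / m) m]
      omega
    simpa using (Finset.card_le_card hsub)
  calc ∑ b ∈ (Finset.range N).image (fun k => k / m),
        ((Finset.range N).filter (fun k => k / m = b)).card • θ ^ b
      ≤ ∑ b ∈ (Finset.range N).image (fun k => k / m), (m : ℝ) * θ ^ b := by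
        apply Finset.sum_le_sum
        intro b _
        rw [nsmul_eq_mul]
        exact mul_le_mul_of_nonneg_right (by exact_mod_cast hcard b) (pow_nonneg hθ0 b)
    _ = (m : ℝ) * ∑ b ∈ (Finset.range N).image (fun k => k / m), θ ^ b := by
        rw [Finset.mul_sum]
    _ ≤ (m : ℝ) * (1 - θ)⁻¹ := by
        apply mul_le_mul_of_nonneg_left _ (by positivity)
        calc ∑ b ∈ (Finset.range N).image (fun k => k / m), θ ^ b
            ≤ ∑' b : ℕ, θ ^ b :=
              (summable_geometric_of_lt_one hθ0 hθ1).sum_le_tsum _ (fun b _ => pow_nonneg hθ0 b)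
          _ = (1 - θ)⁻¹ := tsum_geometric_of_lt_one hθ0 hθ1

lemma entry_summable (h0 : ∀ x y, 0 ≤ Q x y) (h1 : ∀ x, ∑ y, Q x y ≤ 1)
    {m : ℕ} {θ : ℝ} (hm : 0 < m) (hθ0 : 0 ≤ θ) (hθ1 : θ < 1)
    (hθ : ∀ x, ∑ y, (Q ^ m) x y ≤ θ) (x y : W) :
    Summable fun n => (Q ^ n) x y := by
  apply summable_of_sum_range_le (c := (m : ℝ) * (1 - θ)⁻¹)
    (fun n => pow_entry_nonneg h0 n x y)
  intro N
  calc ∑ k ∈ Finset.range N, (Q ^ k) x y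
      ≤ ∑ k ∈ Finset.range N, θ ^ (k / m) :=
        Finset.sum_le_sum fun k _ => entry_le_geo h0 h1 hθ0 hθ k x y
    _ ≤ _ := sum_pow_div_le hθ0 hθ1 hm N

lemma oneSub_mul_green (h0 : ∀ x y, 0 ≤ Q x y) (h1 : ∀ x, ∑ y, Q x y ≤ 1)
    {m : ℕ} {θ : ℝ} (hm : 0 < m) (hθ0 : 0 ≤ θ) (hθ1 : θ < 1)
    (hθ : ∀ x, ∑ y, (Q ^ m) x y ≤ θ) :
    (1 - Q) * (Matrix.of fun x y => ∑' n, (Q ^ n) x y) = 1 := by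
  have hsum := entry_summable h0 h1 hm hθ0 hθ1 hθ
  ext x z
  rw [Matrix.mul_apply]
  have key : (∑' n, (Q ^ n) x z) = (1 : Matrix W W ℝ) x z
      + ∑ y, Q x y * ∑' n, (Q ^ n) y z := by
    rw [Summable.tsum_eq_zero_add (hsum x z)]
    have h00 : (Q ^ 0) x z = (1 : Matrix W W ℝ) x z := by rw [pow_zero]
    rw [h00]
    congr 1
    calc ∑' n, (Q ^ (n + 1)) x z
        = ∑' n, ∑ y, Q x y * (Q ^ n) y z := by
          apply tsum_congr
          intro n
          rw [pow_succ', Matrix.mul_apply]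
      _ = ∑ y, ∑' n, Q x y * (Q ^ n) y z :=
          Summable.tsum_finsetSum (fun y _ => (hsum y z).mul_left _)
      _ = ∑ y, Q x y * ∑' n, (Q ^ n) y z := by
          apply Finset.sum_congr rfl
          intro y _
          exact tsum_mul_left
  have expand : ∀ y, ((1 : Matrix W W ℝ) - Q) x y * (Matrix.of fun x y => ∑' n, (Q ^ n) x y) y z
      = (if x = y then (∑' n, (Q ^ n) y z) else 0) - Q x y * ∑' n, (Q ^ n) y z := by
    intro y
    rw [Matrix.sub_apply, Matrix.one_apply, sub_mul]
    by_cases h : x = y <;> simp [h]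
  rw [Finset.sum_congr rfl (fun y _ => expand y), Finset.sum_sub_distrib,
    Finset.sum_ite_eq Finset.univ x (fun y => ∑' n, (Q ^ n) y z)]
  simp only [Finset.mem_univ, if_true]
  rw [key]
  ring

end core

/-! ### Main theorem -/

/-- Green function via Cramer's rule: for an irreducible Markov chain with
transition matrix `P`, a nonempty set `Z` of states, and a state `a ∉ Z`, the expected
number of visits to `a` strictly before hitting `Z`, starting from `a`, equals
`det((I−P)[Z ∪ {a}]) / det((I−P)[Z])`. -/
theorem stmt14 {V : Type*} [Fintype V] [DecidableEq V]
    (P : Matrix V V ℝ) (hnn : ∀ u v, 0 ≤ P u v) (hrow : ∀ u, ∑ v, P u v = 1)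
    (hirr : ∀ u v, Relation.ReflTransGen (fun a b => 0 < P a b) u v)
    (Z : Set V) (hZ : Z.Nonempty) (a : V) (ha : a ∉ Z) :
    green (fun u v => P u v) Z a =
      (delMat (1 - P) (Z ∪ {a})).det / (delMat (1 - P) Z).det := by
  set W := {v : V // v ∉ Z} with hW
  set Q : Matrix W W ℝ := delMat P Z with hQ
  set A : Matrix W W ℝ := 1 - Q with hA
  have aW : a ∉ Z := ha
  set aW0 : W := ⟨a, aW⟩ with haW0
  have h0 : ∀ x y : W, 0 ≤ Q x y := fun x y => hnn _ _
  -- row sums over the complement of Z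
  have hr1 : ∀ x : W, ∑ y : W, Q x y = ∑ v ∈ Finset.univ.filter (fun v => v ∉ Z), P x.val v := by
    intro x
    exact (Finset.sum_subtype (p := fun v => v ∉ Z) _ (by simp) (fun v => P x.val v)).symm
  have h1 : ∀ x : W, ∑ y : W, Q x y ≤ 1 := by
    intro x
    rw [hr1 x]
    calc ∑ v ∈ Finset.univ.filter (fun v => v ∉ Z), P x.val v
        ≤ ∑ v, P x.val v := Finset.sum_le_sum_of_subset_of_nonneg
          (Finset.filter_subset _ _) (fun v _ _ => hnn _ _)
      _ = 1 := hrow _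
  -- the key "escape" step
  have step : ∀ (u : V) (hu : u ∉ Z) (w : V), 0 < P u w →
      (w ∈ Z ∨ ∃ (hw : w ∉ Z), ∃ j, ∑ y, (Q ^ j) ⟨w, hw⟩ y < 1) →
      ∃ j, ∑ y, (Q ^ j) ⟨u, hu⟩ y < 1 := by
    intro u hu w hPuw hcase
    rcases hcase with hwZ | ⟨hw, j, hj⟩
    · refine ⟨1, ?_⟩
      rw [pow_one, hr1 ⟨u, hu⟩]
      have hsub : Finset.univ.filter (fun v => v ∉ Z) ⊆ Finset.univ.erase w := by
        intro v hv
        simp only [Finset.mem_filter, Finset.mem_univ, true_and] at hv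
        exact Finset.mem_erase.mpr ⟨fun hvw => hv (hvw ▸ hwZ), Finset.mem_univ v⟩
      calc ∑ v ∈ Finset.univ.filter (fun v => v ∉ Z), P u v
          ≤ ∑ v ∈ Finset.univ.erase w, P u v :=
            Finset.sum_le_sum_of_subset_of_nonneg hsub (fun v _ _ => hnn _ _)
        _ = (∑ v, P u v) - P u w := Finset.sum_erase_eq_sub (Finset.mem_univ w)
        _ = 1 - P u w := by rw [hrow]
        _ < 1 := by linarith
    · refine ⟨1 + j, ?_⟩
      set wW0 : W := ⟨w, hw⟩ with hwW0
      have hQuw : Q ⟨u, hu⟩ wW0 = P u w := rfl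
      rw [rowsum_pow_add (Q := Q) 1 j ⟨u, hu⟩]
      simp only [pow_one]
      have hrj_le : ∀ z : W, ∑ y, (Q ^ j) z y ≤ 1 := rowsum_pow_le_one h0 h1 j
      calc ∑ z, Q ⟨u, hu⟩ z * (∑ y, (Q ^ j) z y)
          = (∑ z ∈ Finset.univ.erase wW0, Q ⟨u, hu⟩ z * (∑ y, (Q ^ j) z y))
            + Q ⟨u, hu⟩ wW0 * (∑ y, (Q ^ j) wW0 y) :=
            (Finset.sum_erase_add _ _ (Finset.mem_univ wW0)).symm
        _ ≤ (∑ z ∈ Finset.univ.erase wW0, Q ⟨u, hu⟩ z)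
            + Q ⟨u, hu⟩ wW0 * (∑ y, (Q ^ j) wW0 y) := by
            apply add_le_add_left
            apply Finset.sum_le_sum
            intro z _
            calc Q ⟨u, hu⟩ z * (∑ y, (Q ^ j) z y) ≤ Q ⟨u, hu⟩ z * 1 :=
                  mul_le_mul_of_nonneg_left (hrj_le z) (h0 _ _)
              _ = Q ⟨u, hu⟩ z := mul_one _
        _ = ((∑ z, Q ⟨u, hu⟩ z) - Q ⟨u, hu⟩ wW0) + Q ⟨u, hu⟩ wW0 * (∑ y, (Q ^ j) wW0 y) := by
            rw [Finset.sum_erase_eq_sub (Finset.mem_univ wW0)]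
        _ < 1 := by
            have hs := h1 ⟨u, hu⟩
            have hpos : 0 < Q ⟨u, hu⟩ wW0 := by rw [hQuw]; exact hPuw
            nlinarith [hj, hpos, hs]
  -- every state escapes
  have good : ∀ x : W, ∃ j, ∑ y, (Q ^ j) x y < 1 := by
    intro x
    obtain ⟨z, hz⟩ := hZ
    have key : x.val ∈ Z ∨ ∃ (hu : x.val ∉ Z), ∃ j, ∑ y, (Q ^ j) ⟨x.val, hu⟩ y < 1 := by
      refine Relation.ReflTransGen.head_induction_on (hirr x.val z) (Or.inl hz) ?_
      intro u c hr _ ih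
      by_cases hu : u ∈ Z
      · exact Or.inl hu
      · exact Or.inr ⟨hu, step u hu c hr ih⟩
    rcases key with h | ⟨hu, j, hj⟩
    · exact absurd h x.2
    · exact ⟨j, by convert hj using 3⟩
  -- uniform escape time and contraction factor
  choose jf hjf using good
  set m : ℕ := Finset.univ.sup jf + 1 with hm
  have hm0 : 0 < m := Nat.succ_pos _
  have hmono : ∀ (j k : ℕ) (x : W), ∑ y, (Q ^ (j + k)) x y ≤ ∑ y, (Q ^ j) x y := by
    intro j k x
    rw [rowsum_pow_add j k x]
    calc ∑ z, (Q ^ j) x z * (∑ y, (Q ^ k) z y)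
        ≤ ∑ z, (Q ^ j) x z * 1 := Finset.sum_le_sum fun z _ =>
          mul_le_mul_of_nonneg_left (rowsum_pow_le_one h0 h1 k z) (pow_entry_nonneg h0 j x z)
      _ = _ := by simp
  have hrm : ∀ x : W, ∑ y, (Q ^ m) x y < 1 := by
    intro x
    have hle : jf x ≤ m := le_trans (Finset.le_sup (Finset.mem_univ x)) (Nat.le_succ _)
    have : m = jf x + (m - jf x) := by omega
    rw [this]
    exact lt_of_le_of_lt (hmono (jf x) (m - jf x) x) (hjf x)
  have hWne : Nonempty W := ⟨aW0⟩
  set θ : ℝ := Finset.univ.sup' (Finset.univ_nonempty) (fun x : W => ∑ y, (Q ^ m) x y) with hθdef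
  have hθ : ∀ x : W, ∑ y, (Q ^ m) x y ≤ θ := by
    intro x
    rw [hθdef]
    exact Finset.le_sup' (fun x : W => ∑ y, (Q ^ m) x y) (Finset.mem_univ x)
  have hθ1 : θ < 1 := by
    rw [hθdef]
    exact (Finset.sup'_lt_iff (a := (1:ℝ)) Finset.univ_nonempty).mpr (fun x _ => hrm x)
  have hθ0 : 0 ≤ θ := le_trans
    (Finset.sum_nonneg fun y _ => pow_entry_nonneg h0 m hWne.some y) (hθ hWne.some)
  -- the green matrix
  set S : Matrix W W ℝ := Matrix.of fun x y => ∑' n, (Q ^ n) x y with hS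
  have hinv : A * S = 1 := oneSub_mul_green h0 h1 hm0 hθ0 hθ1 hθ
  have hdet : IsUnit A.det := Matrix.isUnit_det_of_right_inverse hinv
  have hAinv : A⁻¹ = S := Matrix.inv_eq_right_inv hinv
  -- green equals the (aW0, aW0) entry of S
  have hgreen : green (fun u v => P u v) Z a = S aW0 aW0 := by
    apply tsum_congr
    intro n
    simp only [show (fun u v => P u v) = P from rfl]
    rw [inner_eq P Z a ha n, pathsum Q n aW0 aW0]
    rfl
  -- adjugate diagonal entry as a minor determinant
  have hadj : A.adjugate aW0 aW0 = (A.submatrix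
      (fun i : {w : W // ¬ w = aW0} => (i : W)) (fun i : {w : W // ¬ w = aW0} => (i : W))).det := by
    rw [Matrix.adjugate_apply]
    set B : Matrix W W ℝ := A.updateRow aW0 (Pi.single aW0 1) with hB
    set e : {w : W // w = aW0} ⊕ {w : W // ¬ w = aW0} ≃ W := Equiv.sumCompl (· = aW0) with he
    have hblock : B.submatrix e e = Matrix.fromBlocks 1 0
        (Matrix.of fun i j => B i.val j.val) (Matrix.of fun i j => A i.val j.val) := by
      ext i j
      cases i with
      | inl i =>
          cases j with
          | inl j =>
              have hi : (e (Sum.inl i) : W) = aW0 := i.2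
              have hj : (e (Sum.inl j) : W) = aW0 := j.2
              simp only [Matrix.submatrix_apply, Matrix.fromBlocks_apply₁₁]
              rw [hi, hj, hB]
              rw [Matrix.updateRow_self, Pi.single_eq_same]
              have : i = j := Subtype.ext (i.2.trans j.2.symm)
              rw [this, Matrix.one_apply_eq]
          | inr j =>
              have hi : (e (Sum.inl i) : W) = aW0 := i.2
              simp only [Matrix.submatrix_apply, Matrix.fromBlocks_apply₁₂]
              rw [hi, hB, Matrix.updateRow_self]
              have : (e (Sum.inr j) : W) ≠ aW0 := j.2
              rw [Pi.single_eq_of_ne this, Matrix.zero_apply]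
      | inr i =>
          have hi : (e (Sum.inr i) : W) ≠ aW0 := i.2
          cases j with
          | inl j =>
              simp only [Matrix.submatrix_apply, Matrix.fromBlocks_apply₂₁]
              rfl
          | inr j =>
              simp only [Matrix.submatrix_apply, Matrix.fromBlocks_apply₂₂]
              rw [hB, Matrix.updateRow_ne hi]
              rfl
    rw [show B.det = (B.submatrix e e).det from (Matrix.det_submatrix_equiv_self e B).symm,
      hblock, Matrix.det_fromBlocks_zero₁₂, Matrix.det_one, one_mul]
    rfl
  -- identify the minors with the deleted matrices
  have hminor : (A.submatrix (fun i : {w : W // ¬ w = aW0} => (i : W))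
      (fun i : {w : W // ¬ w = aW0} => (i : W))).det = (delMat (1 - P) (Z ∪ {a})).det := by
    set f : {v : V // v ∉ Z ∪ {a}} ≃ {w : W // ¬ w = aW0} :=
      { toFun := fun v => ⟨⟨v.val, fun h => v.2 (Or.inl h)⟩,
          fun h => v.2 (Or.inr (by
            have : v.val = a := congrArg Subtype.val h
            simp [this]))⟩
        invFun := fun w => ⟨w.val.val, by
          rintro (h | h)
          · exact w.val.2 h
          · exact w.2 (Subtype.ext (by simpa using h))⟩
        left_inv := fun v => rfl
        right_inv := fun w => rfl } with hf
    have : delMat (1 - P) (Z ∪ {a}) = (A.submatrix (fun i : {w : W // ¬ w = aW0} => (i : W))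
        (fun i : {w : W // ¬ w = aW0} => (i : W))).submatrix f f := by
      ext u v
      show (1 - P) u.val v.val = A ((f u : {w : W // ¬ w = aW0}) : W) ((f v : {w : W // ¬ w = aW0}) : W)
      rw [hA, Matrix.sub_apply, Matrix.sub_apply, Matrix.one_apply, Matrix.one_apply]
      have hQeq : Q ((f u : {w : W // ¬ w = aW0}) : W) ((f v : {w : W // ¬ w = aW0}) : W)
          = P u.val v.val := rfl
      rw [hQeq]
      have hiff : (((f u : {w : W // ¬ w = aW0}) : W) = ((f v : {w : W // ¬ w = aW0}) : W))
          ↔ u.val = v.val := by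
        rw [Subtype.ext_iff]
        exact Iff.rfl
      rw [if_congr hiff.symm rfl rfl]
    rw [this, Matrix.det_submatrix_equiv_self]
  have hdetZ : A = delMat (1 - P) Z := by
    ext u v
    simp only [delMat, Matrix.submatrix_apply, hA]
    rw [Matrix.sub_apply, Matrix.sub_apply, Matrix.one_apply, Matrix.one_apply]
    have : (u = v) ↔ (u.val = v.val) := Subtype.ext_iff
    simp only [this]
    rfl
  -- put everything together
  have hSentry : S aW0 aW0 = (delMat (1 - P) (Z ∪ {a})).det / (delMat (1 - P) Z).det := by
    rw [← hAinv, Matrix.inv_def, Matrix.smul_apply, Ring.inverse_eq_inv', hadj, hminor,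
      ← hdetZ]
    rw [smul_eq_mul, mul_comm, div_eq_mul_inv]
  rw [hgreen, hSentry]
end

section
/- (Lawler's Green function identity) For an irreducible Markov chain on a finite state space, for any set Z of states and any two states a, b ∉ Z with V \ Z having at least two elements, G_Z(b,b) · G_{Z∪{b}}(a,a) = G_Z(a,a) · G_{Z∪{a}}(b,b), where G_S(v,v) is the expected number of visits to v strictly before hitting S, starting from v. -/
open scoped Classical


namespace Stmt15
variable {V : Type*} [Fintype V] [DecidableEq V]

noncomputable def Q (p : V → V → ℝ) (W : Set V) : Matrix V V ℝ :=
  Matrix.of fun u v => if u ∉ W ∧ v ∉ W then p u v else 0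

noncomputable def A (p : V → V → ℝ) (W : Set V) : Matrix V V ℝ := 1 - Q p W

lemma A_apply (p : V → V → ℝ) (W : Set V) (u v : V) :
    A p W u v = (if u = v then 1 else 0) - (if u ∉ W ∧ v ∉ W then p u v else 0) := by
  simp [A, Q, Matrix.one_apply, Matrix.sub_apply]

lemma det_eq_of_agree_off_col {M N : Matrix V V ℝ} (b : V)
    (hM : ∀ v, v ≠ b → M b v = 0) (hN : ∀ v, v ≠ b → N b v = 0) (hbb : M b b = N b b)
    (h : ∀ u v, v ≠ b → M u v = N u v) : M.det = N.det := by
  rw [← Matrix.det_transpose M, ← Matrix.det_transpose N, Matrix.det_apply, Matrix.det_apply]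
  refine Finset.sum_congr rfl fun σ _ => ?_
  by_cases hσ : σ b = b
  · congr 1
    refine Finset.prod_congr rfl fun i _ => ?_
    show M i (σ i) = N i (σ i)
    by_cases hi : i = b
    · subst hi; rw [hσ, hbb]
    · exact h i (σ i) (fun hc => hi (σ.injective (hc.trans hσ.symm)))
  · rw [Finset.prod_eq_zero (f := fun i => M.transpose (σ i) i) (Finset.mem_univ b)
        (hM (σ b) hσ),
      Finset.prod_eq_zero (f := fun i => N.transpose (σ i) i) (Finset.mem_univ b)
        (hN (σ b) hσ)]

lemma adjugate_A (p : V → V → ℝ) (W : Set V) (b : V) :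
    (A p W).adjugate b b = (A p (W ∪ {b})).det := by
  rw [Matrix.adjugate_apply]
  refine det_eq_of_agree_off_col b ?_ ?_ ?_ ?_
  · intro v hv; simp [Matrix.updateRow_self, Pi.single_apply, hv]
  · intro v hv; simp [A_apply, hv, Ne.symm hv]
  · simp [Matrix.updateRow_self, A_apply]
  · intro u v hv
    by_cases hu : u = b
    · subst hu
      simp [Matrix.updateRow_self, Pi.single_apply, hv, A_apply, Ne.symm hv]
    · rw [Matrix.updateRow_ne hu, A_apply, A_apply]
      congr 1
      by_cases h1 : u ∉ W ∧ v ∉ W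
      · have : (u ∉ W ∪ {b} ∧ v ∉ W ∪ {b}) := by
          simp [Set.mem_union, h1.1, h1.2, hu, hv]
        rw [if_pos h1, if_pos this]
      · have : ¬(u ∉ W ∪ {b} ∧ v ∉ W ∪ {b}) := by
          intro hc
          exact h1 ⟨fun hw => hc.1 (Set.mem_union_left _ hw), fun hw => hc.2 (Set.mem_union_left _ hw)⟩
        rw [if_neg h1, if_neg this]


lemma inner_sum_eq (p : V → V → ℝ) (W : Set V) (a : V) (ha : a ∉ W) : ∀ (n : ℕ) (c : V),
    (∑ γ : Fin (n + 1) → V,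
      if γ 0 = a ∧ γ (Fin.last n) = c ∧ ∀ i, γ i ∉ W then
        ∏ k : Fin n, p (γ k.castSucc) (γ k.succ) else 0) = (Q p W ^ n) a c := by
  intro n
  induction n with
  | zero =>
    intro c
    rw [pow_zero]
    have e1 : (∑ γ : Fin 1 → V,
        if γ 0 = a ∧ γ (Fin.last 0) = c ∧ ∀ i, γ i ∉ W then
          ∏ k : Fin 0, p (γ k.castSucc) (γ k.succ) else 0)
        = ∑ x : V, if x = a ∧ x = c ∧ x ∉ W then 1 else 0 := by
      refine Fintype.sum_equiv (Equiv.funUnique (Fin 1) V) _ _ (fun γ => ?_)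
      have : Fin.last 0 = 0 := rfl
      simp [this, Fin.forall_fin_one, Equiv.funUnique]
    rw [e1, Matrix.one_apply]
    simp only [ite_and]
    rw [Finset.sum_ite_eq' Finset.univ a (fun x => if x = c then if x ∉ W then 1 else 0 else 0)]
    simp [ha]
  | succ n IH =>
    intro c
    -- abbreviations
    set g : (Fin (n + 1) → V) → ℝ := fun δ =>
      if δ 0 = a ∧ (∀ i, δ i ∉ W) ∧ c ∉ W then
        (∏ k : Fin n, p (δ k.castSucc) (δ k.succ)) * p (δ (Fin.last n)) c else 0 with hg
    have key : ∀ (δ : Fin (n + 1) → V) (x : V),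
        (if (Fin.snoc δ x : Fin (n+2) → V) 0 = a ∧
            (Fin.snoc δ x : Fin (n+2) → V) (Fin.last (n+1)) = c ∧
            ∀ i, (Fin.snoc δ x : Fin (n+2) → V) i ∉ W then
          ∏ k : Fin (n+1), p ((Fin.snoc δ x : Fin (n+2) → V) k.castSucc)
            ((Fin.snoc δ x : Fin (n+2) → V) k.succ) else 0)
        = if x = c then g δ else 0 := by
      intro δ x
      have h0 : (Fin.snoc δ x : Fin (n+2) → V) 0 = δ 0 := by
        rw [← Fin.castSucc_zero, Fin.snoc_castSucc]
      have hlast : (Fin.snoc δ x : Fin (n+2) → V) (Fin.last (n+1)) = x := Fin.snoc_last _ _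
      have hall : (∀ i, (Fin.snoc δ x : Fin (n+2) → V) i ∉ W) ↔ ((∀ i, δ i ∉ W) ∧ x ∉ W) := by
        constructor
        · intro h
          refine ⟨fun i => ?_, ?_⟩
          · have := h i.castSucc; rwa [Fin.snoc_castSucc] at this
          · have := h (Fin.last (n+1)); rwa [Fin.snoc_last] at this
        · intro h i
          refine Fin.lastCases ?_ (fun j => ?_) i
          · rw [Fin.snoc_last]; exact h.2
          · rw [Fin.snoc_castSucc]; exact h.1 j
      have hprod : (∏ k : Fin (n+1), p ((Fin.snoc δ x : Fin (n+2) → V) k.castSucc)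
            ((Fin.snoc δ x : Fin (n+2) → V) k.succ))
          = (∏ k : Fin n, p (δ k.castSucc) (δ k.succ)) * p (δ (Fin.last n)) x := by
        rw [Fin.prod_univ_castSucc]
        congr 1
        · refine Finset.prod_congr rfl (fun k _ => ?_)
          rw [Fin.snoc_castSucc, Fin.succ_castSucc, Fin.snoc_castSucc]
        · rw [Fin.snoc_castSucc, Fin.succ_last, Fin.snoc_last]
      rw [hprod]
      by_cases hx : x = c
      · subst hx
        rw [if_pos rfl, hg]
        refine if_congr ?_ rfl rfl
        rw [h0, hlast, hall]
        tauto
      · rw [if_neg hx]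
        rw [if_neg]
        rw [h0, hlast, hall]
        tauto
    have e2 : (∑ γ : Fin (n + 2) → V,
        if γ 0 = a ∧ γ (Fin.last (n+1)) = c ∧ ∀ i, γ i ∉ W then
          ∏ k : Fin (n+1), p (γ k.castSucc) (γ k.succ) else 0)
        = ∑ q : V × (Fin (n+1) → V),
            (if (Fin.snoc q.2 q.1 : Fin (n+2) → V) 0 = a ∧
                (Fin.snoc q.2 q.1 : Fin (n+2) → V) (Fin.last (n+1)) = c ∧
                ∀ i, (Fin.snoc q.2 q.1 : Fin (n+2) → V) i ∉ W then
              ∏ k : Fin (n+1), p ((Fin.snoc q.2 q.1 : Fin (n+2) → V) k.castSucc)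
                ((Fin.snoc q.2 q.1 : Fin (n+2) → V) k.succ)
            else 0) :=
      (Fintype.sum_equiv (Fin.snocEquiv (fun _ => V)) _ _ (fun q => rfl)).symm
    rw [e2, Fintype.sum_prod_type]
    simp only [key]
    have e3 : (∑ x : V, ∑ δ : Fin (n+1) → V, if x = c then g δ else 0)
        = ∑ δ : Fin (n+1) → V, g δ := by
      rw [Finset.sum_comm]
      simp
    rw [e3, pow_succ, Matrix.mul_apply]
    have e4 : ∀ w : V, (Q p W ^ n) a w * Q p W w c
        = ∑ δ : Fin (n+1) → V,
            if δ 0 = a ∧ δ (Fin.last n) = w ∧ ∀ i, δ i ∉ W then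
              (∏ k : Fin n, p (δ k.castSucc) (δ k.succ)) * Q p W w c else 0 := by
      intro w
      rw [← IH w, Finset.sum_mul]
      refine Finset.sum_congr rfl (fun δ _ => ?_)
      rw [ite_mul, zero_mul]
    simp only [e4]
    rw [Finset.sum_comm]
    refine Finset.sum_congr rfl (fun δ _ => ?_)
    rw [Finset.sum_eq_single (δ (Fin.last n))]
    · simp only [hg, Q, Matrix.of_apply]
      by_cases h1 : δ 0 = a
      · by_cases h2 : ∀ i, δ i ∉ W
        · by_cases hc : c ∉ W <;>
            simp [h1, h2, hc, h2 (Fin.last n)]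
        · simp [h2]
      · simp [h1]
    · intro w _ hw
      rw [if_neg (fun h => hw h.2.1.symm)]
    · intro h
      exact absurd (Finset.mem_univ _) h


lemma green_eq_tsum (p : V → V → ℝ) (W : Set V) (a : V) (ha : a ∉ W) :
    green p W a = ∑' n : ℕ, (Q p W ^ n) a a := by
  unfold green
  refine tsum_congr (fun n => ?_)
  rw [← inner_sum_eq p W a ha n a]
  refine Finset.sum_congr rfl (fun γ _ => ?_)
  have hpad : ∀ (i : ℕ) (hi : i ≤ n), pad γ i = γ ⟨i, Nat.lt_succ_of_le hi⟩ := by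
    intro i hi; simp [pad, min_eq_left hi]
  have h1 : (pad γ 0 = a ∧ pad γ n = a ∧ ∀ i ≤ n, pad γ i ∉ W)
      ↔ (γ 0 = a ∧ γ (Fin.last n) = a ∧ ∀ i, γ i ∉ W) := by
    have h0 : pad γ 0 = γ 0 := by
      rw [hpad 0 (Nat.zero_le n)]
      exact congrArg γ (Fin.ext (by simp))
    have hn : pad γ n = γ (Fin.last n) := by
      rw [hpad n le_rfl]
      exact congrArg γ (Fin.ext (by simp [Fin.last]))
    rw [h0, hn]
    constructor
    · rintro ⟨x1, x2, x3⟩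
      refine ⟨x1, x2, fun i => ?_⟩
      have := x3 i.1 i.is_le
      rwa [hpad i.1 i.is_le, Fin.eta] at this
    · rintro ⟨x1, x2, x3⟩
      refine ⟨x1, x2, fun i hi => ?_⟩
      rw [hpad i hi]; exact x3 _
  have h2 : (∏ k ∈ Finset.range n, p (pad γ k) (pad γ (k + 1)))
      = ∏ k : Fin n, p (γ k.castSucc) (γ k.succ) := by
    rw [← Fin.prod_univ_eq_prod_range (fun k => p (pad γ k) (pad γ (k+1))) n]
    refine Finset.prod_congr rfl (fun k _ => ?_)
    rw [hpad k.1 (by omega), hpad (k.1+1) (by omega)]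
    exact congrArg₂ p (congrArg γ (Fin.ext rfl)) (congrArg γ (Fin.ext rfl))
  by_cases h : γ 0 = a ∧ γ (Fin.last n) = a ∧ ∀ i, γ i ∉ W
  · rw [if_pos h, if_pos (h1.mpr h), h2]
  · rw [if_neg h, if_neg (fun hc => h (h1.mp hc))]


section conv

variable (p : V → V → ℝ) (W : Set V)

/-- row sums of powers of `Q`. -/
noncomputable def R (n : ℕ) (u : V) : ℝ := ∑ v, (Q p W ^ n) u v

lemma Q_nonneg (hnn : ∀ u v, 0 ≤ p u v) (u v : V) : 0 ≤ Q p W u v := by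
  simp only [Q, Matrix.of_apply]
  split
  · exact hnn u v
  · exact le_refl 0

lemma Qpow_nonneg (hnn : ∀ u v, 0 ≤ p u v) (n : ℕ) (u v : V) : 0 ≤ (Q p W ^ n) u v := by
  induction n generalizing u v with
  | zero => rw [pow_zero, Matrix.one_apply]; split <;> norm_num
  | succ n IH =>
    rw [pow_succ, Matrix.mul_apply]
    exact Finset.sum_nonneg fun w _ => mul_nonneg (IH u w) (Q_nonneg p W hnn w v)

lemma R_nonneg (hnn : ∀ u v, 0 ≤ p u v) (n : ℕ) (u : V) : 0 ≤ R p W n u :=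
  Finset.sum_nonneg fun v _ => Qpow_nonneg p W hnn n u v

lemma R_zero (u : V) : R p W 0 u = 1 := by
  simp [R, Matrix.one_apply]

lemma R_one_le (hnn : ∀ u v, 0 ≤ p u v) (hrow : ∀ u, ∑ v, p u v = 1) (u : V) :
    R p W 1 u ≤ 1 := by
  rw [R, ← hrow u]
  refine Finset.sum_le_sum fun v _ => ?_
  rw [pow_one]
  simp only [Q, Matrix.of_apply]
  split
  · exact le_refl _
  · exact hnn u v

lemma R_add (m n : ℕ) (u : V) :
    R p W (m + n) u = ∑ w, (Q p W ^ m) u w * R p W n w := by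
  simp only [R, pow_add, Matrix.mul_apply, Finset.mul_sum]
  exact Finset.sum_comm

lemma R_succ_le (hnn : ∀ u v, 0 ≤ p u v) (hrow : ∀ u, ∑ v, p u v = 1) (n : ℕ) (u : V) :
    R p W (n + 1) u ≤ R p W n u := by
  rw [R_add p W n 1 u]
  calc ∑ w, (Q p W ^ n) u w * R p W 1 w
      ≤ ∑ w, (Q p W ^ n) u w * 1 :=
        Finset.sum_le_sum fun w _ => mul_le_mul_of_nonneg_left (R_one_le p W hnn hrow w)
          (Qpow_nonneg p W hnn n u w)
    _ = R p W n u := by simp [R]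

lemma R_anti (hnn : ∀ u v, 0 ≤ p u v) (hrow : ∀ u, ∑ v, p u v = 1) {m n : ℕ} (h : m ≤ n)
    (u : V) : R p W n u ≤ R p W m u := by
  induction n with
  | zero => rw [Nat.le_zero.mp h]
  | succ n IH =>
    rcases Nat.lt_or_ge m (n+1) with h' | h'
    · exact (R_succ_le p W hnn hrow n u).trans (IH (by omega))
    · have : m = n + 1 := by omega
      rw [this]

lemma R_le_one (hnn : ∀ u v, 0 ≤ p u v) (hrow : ∀ u, ∑ v, p u v = 1) (n : ℕ) (u : V) :
    R p W n u ≤ 1 := by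
  have := R_anti p W hnn hrow (Nat.zero_le n) u
  rwa [R_zero] at this

lemma exists_R_lt_one (hnn : ∀ u v, 0 ≤ p u v) (hrow : ∀ u, ∑ v, p u v = 1)
    (hirr : ∀ u v, Relation.ReflTransGen (fun a b => 0 < p a b) u v)
    (hW : W.Nonempty) (u : V) : ∃ n, R p W n u < 1 := by
  obtain ⟨z, hz⟩ := hW
  have hR1 : ∀ x, x ∈ W → R p W 1 x = 0 := by
    intro x hx
    refine Finset.sum_eq_zero fun v _ => ?_
    rw [pow_one]
    simp only [Q, Matrix.of_apply]
    rw [if_neg (fun h => h.1 hx)]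
  induction (hirr u z) using Relation.ReflTransGen.head_induction_on with
  | refl => exact ⟨1, by rw [hR1 z hz]; norm_num⟩
  | @head x c hac hcz IH =>
    by_cases hxW : x ∈ W
    · exact ⟨1, by rw [hR1 x hxW]; norm_num⟩
    · by_cases hcW : c ∈ W
      · refine ⟨1, ?_⟩
        have : R p W 1 x < ∑ v, p x v := by
          refine Finset.sum_lt_sum (fun v _ => ?_) ⟨c, Finset.mem_univ c, ?_⟩
          · rw [pow_one]; simp only [Q, Matrix.of_apply]
            split
            · exact le_refl _
            · exact hnn x v
          · rw [pow_one]; simp only [Q, Matrix.of_apply]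
            rw [if_neg (fun h => h.2 hcW)]
            exact hac
        rwa [hrow x] at this
      · obtain ⟨n, hn⟩ := IH
        refine ⟨1 + n, ?_⟩
        rw [R_add p W 1 n x]
        have hQxc : 0 < (Q p W ^ 1) x c := by
          rw [pow_one]; simp only [Q, Matrix.of_apply]
          rw [if_pos ⟨hxW, hcW⟩]
          exact hac
        have step : ∑ w, (Q p W ^ 1) x w * R p W n w < ∑ w, (Q p W ^ 1) x w := by
          refine Finset.sum_lt_sum (fun w _ => ?_) ⟨c, Finset.mem_univ c, ?_⟩
          · calc (Q p W ^ 1) x w * R p W n w ≤ (Q p W ^ 1) x w * 1 :=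
                mul_le_mul_of_nonneg_left (R_le_one p W hnn hrow n w)
                  (Qpow_nonneg p W hnn 1 x w)
            _ = (Q p W ^ 1) x w := mul_one _
          · calc (Q p W ^ 1) x c * R p W n c < (Q p W ^ 1) x c * 1 :=
                mul_lt_mul_of_pos_left (lt_of_lt_of_le hn (le_refl 1)) hQxc
            _ = (Q p W ^ 1) x c := mul_one _
        have : (∑ w, (Q p W ^ 1) x w) ≤ 1 := R_one_le p W hnn hrow x
        exact lt_of_lt_of_le step this

lemma exists_uniform (hnn : ∀ u v, 0 ≤ p u v) (hrow : ∀ u, ∑ v, p u v = 1)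
    (hirr : ∀ u v, Relation.ReflTransGen (fun a b => 0 < p a b) u v)
    (hW : W.Nonempty) :
    ∃ (N : ℕ) (r : ℝ), 0 < N ∧ 0 ≤ r ∧ r < 1 ∧ ∀ u, R p W N u ≤ r := by
  have hne : Nonempty V := ⟨hW.choose⟩
  choose f hf using exists_R_lt_one p W hnn hrow hirr hW
  set N := 1 + Finset.univ.sup f with hN
  have hfN : ∀ u, f u ≤ N := fun u => le_trans (Finset.le_sup (Finset.mem_univ u)) (by omega)
  have hRN : ∀ u, R p W N u < 1 := fun u =>
    lt_of_le_of_lt (R_anti p W hnn hrow (hfN u) u) (hf u)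
  set r := Finset.univ.sup' (Finset.univ_nonempty) (fun u => R p W N u) with hr
  refine ⟨N, max r 0, by omega, le_max_right _ _, ?_, fun u => ?_⟩
  · rw [max_lt_iff]
    exact ⟨(Finset.sup'_lt_iff _).mpr (fun u _ => hRN u), by norm_num⟩
  · exact le_trans (Finset.le_sup' _ (Finset.mem_univ u)) (le_max_left _ _)

lemma R_mul_pow (hnn : ∀ u v, 0 ≤ p u v) (N : ℕ) (r : ℝ) (hr0 : 0 ≤ r)
    (hub : ∀ u, R p W N u ≤ r) : ∀ k u, R p W (k * N) u ≤ r ^ k := by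
  intro k
  induction k with
  | zero => intro u; rw [Nat.zero_mul, R_zero, pow_zero]
  | succ k IH =>
    intro u
    have : (k + 1) * N = N + k * N := by ring
    rw [this, R_add p W N (k * N) u]
    calc ∑ w, (Q p W ^ N) u w * R p W (k * N) w
        ≤ ∑ w, (Q p W ^ N) u w * r ^ k :=
          Finset.sum_le_sum fun w _ => mul_le_mul_of_nonneg_left (IH w)
            (Qpow_nonneg p W hnn N u w)
      _ = R p W N u * r ^ k := by rw [← Finset.sum_mul, R]
      _ ≤ r * r ^ k := mul_le_mul_of_nonneg_right (hub u) (pow_nonneg hr0 k)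
      _ = r ^ (k + 1) := by rw [pow_succ, mul_comm]

lemma summable_Qpow (hnn : ∀ u v, 0 ≤ p u v) (hrow : ∀ u, ∑ v, p u v = 1)
    (hirr : ∀ u v, Relation.ReflTransGen (fun a b => 0 < p a b) u v)
    (hW : W.Nonempty) (u v : V) : Summable (fun n => (Q p W ^ n) u v) := by
  obtain ⟨N, r, hN0, hr0, hr1, hub⟩ := exists_uniform p W hnn hrow hirr hW
  set r' : ℝ := max r (1/2) with hr'
  have hr'0 : (0:ℝ) < r' := lt_of_lt_of_le (by norm_num) (le_max_right _ _)
  have hr'1 : r' < 1 := max_lt hr1 (by norm_num)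
  have hub' : ∀ u, R p W N u ≤ r' := fun u => le_trans (hub u) (le_max_left _ _)
  set s : ℝ := r' ^ ((N:ℝ)⁻¹) with hs
  have hNne : (N:ℝ) ≠ 0 := Nat.cast_ne_zero.mpr (by omega)
  have hs0 : 0 < s := Real.rpow_pos_of_pos hr'0 _
  have hs1 : s < 1 := Real.rpow_lt_one hr'0.le hr'1 (by positivity)
  have hsN : s ^ N = r' := by
    rw [hs, ← Real.rpow_natCast (r' ^ ((N:ℝ)⁻¹)) N, ← Real.rpow_mul hr'0.le,
      inv_mul_cancel₀ hNne, Real.rpow_one]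
  have key : ∀ n, (Q p W ^ n) u v ≤ s⁻¹ ^ N * s ^ n := by
    intro n
    have h1 : (Q p W ^ n) u v ≤ R p W n u :=
      Finset.single_le_sum (fun w _ => Qpow_nonneg p W hnn n u w) (Finset.mem_univ v)
    have h2 : R p W n u ≤ R p W (n / N * N) u :=
      R_anti p W hnn hrow (Nat.div_mul_le_self n N) u
    have h3 : R p W (n / N * N) u ≤ r' ^ (n / N) :=
      R_mul_pow p W hnn N r' hr'0.le hub' (n / N) u
    have h4 : r' ^ (n / N) = s ^ (N * (n / N)) := by rw [pow_mul, hsN]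
    have h5 : s ^ (N * (n / N)) ≤ s ^ (n + 1 - N) := by
      refine pow_le_pow_of_le_one hs0.le hs1.le ?_
      have hmod := Nat.div_add_mod n N
      have := Nat.mod_lt n hN0
      omega
    have h6 : s ^ (n + 1 - N) ≤ s⁻¹ ^ N * s ^ n := by
      rw [inv_pow, ← div_eq_inv_mul, le_div_iff₀ (pow_pos hs0 N), ← pow_add]
      exact pow_le_pow_of_le_one hs0.le hs1.le (by omega)
    calc (Q p W ^ n) u v ≤ R p W n u := h1
      _ ≤ R p W (n / N * N) u := h2
      _ ≤ r' ^ (n / N) := h3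
      _ = s ^ (N * (n / N)) := h4
      _ ≤ s ^ (n + 1 - N) := h5
      _ ≤ s⁻¹ ^ N * s ^ n := h6
  have hgeo : Summable (fun n : ℕ => s⁻¹ ^ N * s ^ n) :=
    (summable_geometric_of_lt_one hs0.le hs1).mul_left _
  exact Summable.of_nonneg_of_le (fun n => Qpow_nonneg p W hnn n u v) key hgeo

/-- the matrix of entrywise sums of the powers of `Q`. -/
noncomputable def S : Matrix V V ℝ := Matrix.of fun u v => ∑' n : ℕ, (Q p W ^ n) u v

lemma mul_S_eq (hnn : ∀ u v, 0 ≤ p u v) (hrow : ∀ u, ∑ v, p u v = 1)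
    (hirr : ∀ u v, Relation.ReflTransGen (fun a b => 0 < p a b) u v)
    (hW : W.Nonempty) : A p W * S p W = 1 := by
  have hsum : ∀ w v, Summable (fun n => (Q p W ^ n) w v) :=
    fun w v => summable_Qpow p W hnn hrow hirr hW w v
  ext u v
  rw [Matrix.mul_apply]
  have expand : ∀ w, A p W u w * S p W w v
      = (if u = w then 1 else 0) * S p W w v - Q p W u w * S p W w v := by
    intro w
    rw [A, Matrix.sub_apply, Matrix.one_apply, sub_mul]
  simp only [expand]
  rw [Finset.sum_sub_distrib]
  have e1 : (∑ w, (if u = w then (1:ℝ) else 0) * S p W w v) = S p W u v := by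
    simp [Finset.sum_ite_eq]
  have e2 : (∑ w, Q p W u w * S p W w v) = ∑' n : ℕ, (Q p W ^ (n+1)) u v := by
    have : ∀ w, Q p W u w * S p W w v = ∑' n : ℕ, Q p W u w * (Q p W ^ n) w v := by
      intro w
      rw [S, Matrix.of_apply, tsum_mul_left]
    simp only [this]
    rw [← Summable.tsum_finsetSum (fun w _ => (hsum w v).mul_left _)]
    refine tsum_congr fun n => ?_
    rw [pow_succ']
    rw [Matrix.mul_apply]
  have e3 : (∑' n : ℕ, (Q p W ^ (n+1)) u v) = S p W u v - (1 : Matrix V V ℝ) u v := by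
    have h0 := Summable.tsum_eq_zero_add (hsum u v)
    rw [S, Matrix.of_apply]
    rw [h0, pow_zero]
    ring
  rw [e1, e2, e3]
  ring

lemma A_inv_eq (hnn : ∀ u v, 0 ≤ p u v) (hrow : ∀ u, ∑ v, p u v = 1)
    (hirr : ∀ u v, Relation.ReflTransGen (fun a b => 0 < p a b) u v)
    (hW : W.Nonempty) : (A p W)⁻¹ = S p W :=
  Matrix.inv_eq_right_inv (mul_S_eq p W hnn hrow hirr hW)

lemma det_A_ne_zero (hnn : ∀ u v, 0 ≤ p u v) (hrow : ∀ u, ∑ v, p u v = 1)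
    (hirr : ∀ u v, Relation.ReflTransGen (fun a b => 0 < p a b) u v)
    (hW : W.Nonempty) : (A p W).det ≠ 0 :=
  (Matrix.isUnit_det_of_right_inverse (mul_S_eq p W hnn hrow hirr hW)).ne_zero

lemma green_formula (hnn : ∀ u v, 0 ≤ p u v) (hrow : ∀ u, ∑ v, p u v = 1)
    (hirr : ∀ u v, Relation.ReflTransGen (fun a b => 0 < p a b) u v)
    (hW : W.Nonempty) (x : V) (hx : x ∉ W) :
    green p W x = (A p (W ∪ {x})).det / (A p W).det := by
  rw [green_eq_tsum p W x hx]
  have h1 : (A p W)⁻¹ = S p W := A_inv_eq p W hnn hrow hirr hW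
  have h2 : (∑' n : ℕ, (Q p W ^ n) x x) = S p W x x := rfl
  rw [h2, ← h1, Matrix.inv_def, Matrix.smul_apply, Ring.inverse_eq_inv, adjugate_A,
    smul_eq_mul, div_eq_inv_mul]

end conv

end Stmt15

/-- Lawler's Green function identity: for an irreducible Markov chain, a
nonempty set `Z` of states, and two states `a, b ∉ Z` with at least two states outside
`Z`, one has `G_Z(b,b) · G_{Z∪{b}}(a,a) = G_Z(a,a) · G_{Z∪{a}}(b,b)`. -/
theorem stmt15 {V : Type*} [Fintype V] [DecidableEq V]
    (p : V → V → ℝ) (hnn : ∀ u v, 0 ≤ p u v) (hrow : ∀ u, ∑ v, p u v = 1)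
    (hirr : ∀ u v, Relation.ReflTransGen (fun a b => 0 < p a b) u v)
    (Z : Set V) (hZ : Z.Nonempty) (a b : V) (ha : a ∉ Z) (hb : b ∉ Z)
    (h2 : Set.Nontrivial Zᶜ) :
    green p Z b * green p (Z ∪ {b}) a = green p Z a * green p (Z ∪ {a}) b := by
  classical
  by_cases hab : a = b
  · subst hab; rfl
  · have hZb : (Z ∪ {b}).Nonempty := hZ.mono Set.subset_union_left
    have hZa : (Z ∪ {a}).Nonempty := hZ.mono Set.subset_union_left
    have hA : a ∉ Z ∪ {b} := by simp [ha, hab]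
    have hB : b ∉ Z ∪ {a} := by
      simp only [Set.mem_union, Set.mem_singleton_iff]
      exact fun h => h.elim hb (fun h' => hab h'.symm)
    rw [Stmt15.green_formula p Z hnn hrow hirr hZ b hb,
        Stmt15.green_formula p (Z ∪ {b}) hnn hrow hirr hZb a hA,
        Stmt15.green_formula p Z hnn hrow hirr hZ a ha,
        Stmt15.green_formula p (Z ∪ {a}) hnn hrow hirr hZa b hB]
    have hset : (Z ∪ {b}) ∪ {a} = (Z ∪ {a}) ∪ {b} := by
      rw [Set.union_assoc, Set.union_assoc, Set.union_comm ({b} : Set V)]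
    rw [hset]
    have d1 := Stmt15.det_A_ne_zero p Z hnn hrow hirr hZ
    have d2 := Stmt15.det_A_ne_zero p (Z ∪ {a}) hnn hrow hirr hZa
    have d3 := Stmt15.det_A_ne_zero p (Z ∪ {b}) hnn hrow hirr hZb
    have key : ∀ (d dx u : ℝ), u ≠ 0 → u / d * (dx / u) = dx / d := by
      intro d dx u hu
      rw [div_mul_div_comm, mul_comm u dx, mul_div_mul_right _ _ hu]
    rw [key _ _ _ d3, key _ _ _ d2]
end
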